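/- arXiv:1205.5247 — 9 statements merged into one kernel-verified Lean document; each statement's English description precedes it below -/
import Mathlib

section
/- Let M be a matroid on a finite linearly ordered ground set E and A ⊆ E. Define P_M(A) as the set of elements e ∈ E \ A such that e is the smallest element of some cocircuit of M contained in E \ A. Then |P_M(A)| = r(M) − r_M(A), the corank of A. -/
open Set

/-- `e` is the smallest element of `C`. -/
def SmallestIn {α : Type*} [LinearOrder α] (e : α) (C : Set α) : Prop :=
  e ∈ C ∧ ∀ f ∈ C, e ≤ f

/-- `C` is a circuit of `M`: a minimal dependent set. -/
def IsCircuit {α : Type*} (M : Matroid α) (C : Set α) : Prop :=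
  ¬ M.Indep C ∧ ∀ x ∈ C, M.Indep (C \ {x})

/-- A cocircuit is a circuit of the dual matroid. -/
def IsCocircuit {α : Type*} (M : Matroid α) (C : Set α) : Prop :=
  IsCircuit M✶ C

/-- `P_M(A)`: elements outside `A` that are smallest in some cocircuit avoiding `A`. -/
def Pset {α : Type*} [LinearOrder α] (M : Matroid α) (A : Set α) : Set α :=
  {e | e ∉ A ∧ ∃ C, IsCocircuit M C ∧ C ⊆ Aᶜ ∧ SmallestIn e C}

/-- `Q_M(A)`: elements of `A` that are smallest in some circuit contained in `A`. -/
def Qset {α : Type*} [LinearOrder α] (M : Matroid α) (A : Set α) : Set α :=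
  {e | e ∈ A ∧ ∃ C, IsCircuit M C ∧ C ⊆ A ∧ SmallestIn e C}

/-- Externally active elements of `A`. -/
def ExtSet {α : Type*} [LinearOrder α] (M : Matroid α) (A : Set α) : Set α :=
  {e | e ∉ A ∧ ∃ C, IsCircuit M C ∧ C ⊆ A ∪ {e} ∧ SmallestIn e C}

/-- Internally active elements of `A`. -/
def IntSet {α : Type*} [LinearOrder α] (M : Matroid α) (A : Set α) : Set α :=
  {e | e ∈ A ∧ ∃ C, IsCocircuit M C ∧ C ⊆ Aᶜ ∪ {e} ∧ SmallestIn e C}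

/-- The rank of a set: the largest cardinality of an independent subset. -/
noncomputable def rk {α : Type*} (M : Matroid α) (A : Set α) : ℕ :=
  sSup (Set.ncard '' {I | I ⊆ A ∧ M.Indep I})

/-- Matroid perspective (strong-map / quotient condition, form (MP3)). -/
def Perspective {α : Type*} (M M' : Matroid α) : Prop :=
  ∀ C D : Set α, IsCircuit M C → IsCocircuit M' D → (C ∩ D).ncard ≠ 1

/-- Rank codrop of a subset in a matroid perspective. -/
noncomputable def rcd {α : Type*} (M M' : Matroid α) (A : Set α) : ℕ :=
  ((rk M Set.univ : ℤ) - rk M' Set.univ - ((rk M A : ℤ) - rk M' A)).toNat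

section Aux

variable {α : Type*} [Fintype α] [LinearOrder α] {M : Matroid α}

lemma coindep_iff_closure (hE : M.E = Set.univ) (X : Set α) :
    M✶.Indep X ↔ M.closure Xᶜ = Set.univ := by
  have h := Matroid.coindep_iff_closure_compl_eq_ground (M := M) (X := X)
    (by rw [hE]; exact subset_univ _)
  rw [Matroid.coindep_def] at h
  rw [h, hE, compl_eq_univ_diff]

lemma mem_pset_iff (hE : M.E = Set.univ) (A : Set α) (e : α) :
    e ∈ Pset M A ↔ e ∉ A ∧ e ∉ M.closure (A ∪ Iio e) := by
  constructor
  · rintro ⟨heA, C, ⟨hdep, hmin⟩, hCA, heC, hsm⟩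
    refine ⟨heA, fun hcl => ?_⟩
    have hsub : A ∪ Iio e ⊆ Cᶜ := by
      rintro f (hf | hf)
      · exact fun hfC => (hCA hfC) hf
      · exact fun hfC => absurd (hsm f hfC) (not_le.2 hf)
    have hecl : e ∈ M.closure Cᶜ := M.closure_subset_closure hsub hcl
    have h1 : M.closure (C \ {e})ᶜ = Set.univ :=
      (coindep_iff_closure hE _).1 (hmin e heC)
    have h2 : (C \ {e})ᶜ = insert e Cᶜ := by
      ext x; by_cases hx : x = e <;> simp [hx, heC]
    rw [h2, Matroid.closure_insert_eq_of_mem_closure hecl] at h1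
    exact hdep ((coindep_iff_closure hE C).2 h1)
  · rintro ⟨heA, hcl⟩
    obtain ⟨I, hI⟩ := M.exists_isBasis (A ∪ Iio e) (by rw [hE]; exact subset_univ _)
    have heX : e ∉ A ∪ Iio e := by
      rintro (h | h)
      · exact heA h
      · exact lt_irrefl e h
    have heI : e ∉ I := fun h => heX (hI.subset h)
    have hIcl : e ∉ M.closure I := by rwa [hI.closure_eq_closure]
    have hins : M.Indep (insert e I) := by
      rw [Matroid.insert_indep_iff]
      exact ⟨hI.indep, fun _ => ⟨by rw [hE]; trivial, hIcl⟩⟩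
    obtain ⟨B, hB, hIB⟩ := hins.exists_isBase_superset
    have heB : e ∈ B := hIB (mem_insert _ _)
    have hIB' : I ⊆ B \ {e} := fun x hx =>
      ⟨hIB (mem_insert_of_mem _ hx), fun h => heI (h ▸ hx)⟩
    have hclB : M.closure B = Set.univ := by rw [hB.closure_eq, hE]
    have hne : e ∉ M.closure (B \ {e}) := hB.indep.notMem_closure_sdiff_of_mem heB
    have hXcl : A ∪ Iio e ⊆ M.closure (B \ {e}) := by
      have h1 : A ∪ Iio e ⊆ M.closure I := hI.subset_closure
      exact h1.trans (M.closure_subset_closure hIB')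
    -- the cocircuit
    refine ⟨heA, (M.closure (B \ {e}))ᶜ, ⟨?_, ?_⟩, ?_, ?_, ?_⟩
    · intro h
      rw [coindep_iff_closure hE, compl_compl, M.closure_closure] at h
      exact hne (by rw [h]; trivial)
    · intro x hx
      rw [coindep_iff_closure hE]
      have hxB : x ∉ M.closure (B \ {e}) := hx
      have hxcl : x ∈ M.closure (insert e (B \ {e})) \ M.closure (B \ {e}) := by
        refine ⟨?_, hxB⟩
        have : insert e (B \ {e}) = B := insert_diff_singleton.trans (by
          rw [insert_eq_self.2 heB])
        rw [this, hclB]; trivial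
      have hexch := Matroid.closure_exchange hxcl
      have hBsub : B ⊆ M.closure (insert x (B \ {e})) := by
        intro b hb
        by_cases hbe : b = e
        · exact hbe ▸ hexch.1
        · exact M.subset_closure _ (by rw [hE]; exact subset_univ _)
            (mem_insert_of_mem _ ⟨hb, hbe⟩)
      have huniv : M.closure (insert x (B \ {e})) = Set.univ := by
        apply eq_univ_of_univ_subset
        rw [← hclB]
        exact M.closure_subset_closure_of_subset_closure hBsub
      apply eq_univ_of_univ_subset
      rw [← huniv]
      apply M.closure_subset_closure
      intro y hy hmem
      have hyC : y ∉ M.closure (B \ {e}) := hmem.1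
      have hyx : y ≠ x := hmem.2
      rcases hy with rfl | hy
      · exact hyx rfl
      · exact hyC (M.subset_closure _ (by rw [hE]; exact subset_univ _) hy)
    · intro x hx
      exact fun hxA => hx (hXcl (Or.inl hxA))
    · exact hne
    · intro f hf
      by_contra hlt
      exact hf (hXcl (Or.inr (not_le.1 hlt)))

lemma rk_eq_ncard_basis {I X : Set α} (hX : X ⊆ M.E) (hI : M.IsBasis I X) :
    rk M X = I.ncard := by
  apply le_antisymm
  · apply csSup_le
    · exact ⟨(∅ : Set α).ncard, ⟨∅, ⟨empty_subset _, M.empty_indep⟩, rfl⟩⟩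
    · rintro b ⟨J, ⟨hJX, hJ⟩, rfl⟩
      obtain ⟨J', hJ', hJJ'⟩ := hJ.subset_isBasis_of_subset hJX hX
      calc J.ncard ≤ J'.ncard := ncard_le_ncard hJJ' (toFinite _)
        _ = I.ncard := by
          rw [ncard_def, ncard_def, hJ'.encard_eq_encard hI]
  · apply le_csSup
    · exact (toFinite _).bddAbove
    · exact ⟨I, ⟨hI.subset, hI.indep⟩, rfl⟩

lemma indep_union_aux (hE : M.E = Set.univ) :
    ∀ (n : ℕ) (I S : Set α), S.ncard ≤ n → M.Indep I →
      (∀ e ∈ S, e ∉ M.closure (I ∪ (S ∩ Iio e))) → M.Indep (I ∪ S) := by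
  intro n
  induction n with
  | zero =>
    intro I S hS hI _
    rw [Nat.le_zero, ncard_eq_zero (toFinite S)] at hS
    rw [hS, union_empty]; exact hI
  | succ n ih =>
    intro I S hS hI h
    rcases S.eq_empty_or_nonempty with rfl | hne
    · rw [union_empty]; exact hI
    obtain ⟨m, hmS, hmax⟩ := Set.exists_max_image S id (toFinite S) hne
    set S' := S \ {m} with hS'
    have hS'card : S'.ncard ≤ n := by
      have h2 := ncard_diff_singleton_lt_of_mem hmS (toFinite S)
      rw [← hS'] at h2
      omega
    have hsub : ∀ e ∈ S', e ∉ M.closure (I ∪ (S' ∩ Iio e)) := by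
      intro e he hecl
      exact h e he.1 (M.closure_subset_closure
        (union_subset_union_right _ (inter_subset_inter_left _ diff_subset)) hecl)
    have hI' : M.Indep (I ∪ S') := ih I S' hS'card hI hsub
    have hmcl : m ∉ M.closure (I ∪ S') := by
      intro hm
      apply h m hmS
      apply M.closure_subset_closure _ hm
      apply union_subset_union_right
      intro x hx
      exact ⟨hx.1, lt_of_le_of_ne (hmax x hx.1) hx.2⟩
    have : M.Indep (insert m (I ∪ S')) := by
      rw [Matroid.insert_indep_iff]
      exact ⟨hI', fun _ => ⟨by rw [hE]; trivial, hmcl⟩⟩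
    have heq : I ∪ S = insert m (I ∪ S') := by
      ext x
      simp only [mem_union, mem_insert_iff, hS', mem_diff, mem_singleton_iff]
      constructor
      · rintro (hx | hx)
        · exact Or.inr (Or.inl hx)
        · by_cases hxm : x = m
          · exact Or.inl hxm
          · exact Or.inr (Or.inr ⟨hx, hxm⟩)
      · rintro (rfl | hx | hx)
        · exact Or.inr hmS
        · exact Or.inl hx
        · exact Or.inr hx.1
    rwa [heq]

end Aux

theorem corank_eq_card_Pset {α : Type*} [Fintype α] [LinearOrder α]
    (M : Matroid α) (hE : M.E = Set.univ) (A : Set α) :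
    (Pset M A).ncard = rk M Set.univ - rk M A := by
  have hAE : A ⊆ M.E := by rw [hE]; exact subset_univ _
  obtain ⟨I, hI⟩ := M.exists_isBasis A hAE
  set P := Pset M A with hP
  have hPmem : ∀ e ∈ P, e ∉ A ∧ e ∉ M.closure (A ∪ Iio e) :=
    fun e he => (mem_pset_iff hE A e).1 he
  -- I ∪ P is independent
  have hindep : M.Indep (I ∪ P) := by
    apply indep_union_aux hE P.ncard I P le_rfl hI.indep
    intro e he hecl
    apply (hPmem e he).2
    apply M.closure_subset_closure _ hecl
    exact union_subset_union hI.subset inter_subset_right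
  -- I ∪ P is spanning
  have hclAP : ∀ e, e ∈ M.closure (A ∪ P) := by
    by_contra hcon
    push_neg at hcon
    set T := {e | e ∉ M.closure (A ∪ P)} with hT
    obtain ⟨e, heT⟩ := hcon
    have hTne : T.Nonempty := ⟨e, heT⟩
    obtain ⟨m, hmT, hmin⟩ := Set.exists_min_image T id (toFinite T) hTne
    have hmAP : m ∉ A ∪ P :=
      fun h => hmT (M.subset_closure _ (by rw [hE]; exact subset_univ _) h)
    have hmA : m ∉ A := fun h => hmAP (Or.inl h)
    have hmP : m ∉ P := fun h => hmAP (Or.inr h)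
    have hmcl : m ∈ M.closure (A ∪ Iio m) := by
      by_contra hmcl
      exact hmP ((mem_pset_iff hE A m).2 ⟨hmA, hmcl⟩)
    have hsub : A ∪ Iio m ⊆ M.closure (A ∪ P) := by
      rintro f (hf | hf)
      · exact M.subset_closure _ (by rw [hE]; exact subset_univ _) (Or.inl hf)
      · by_contra hfcl
        exact absurd (hmin f hfcl) (not_le.2 hf)
    exact hmT (M.closure_subset_closure_of_subset_closure hsub hmcl)
  have hspan : M.E ⊆ M.closure (I ∪ P) := by
    rw [hE]
    intro e _
    have hsub : A ∪ P ⊆ M.closure (I ∪ P) := by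
      rintro f (hf | hf)
      · exact M.closure_subset_closure subset_union_left (hI.subset_closure hf)
      · exact M.subset_closure _ (by rw [hE]; exact subset_univ _) (Or.inr hf)
    exact M.closure_subset_closure_of_subset_closure hsub (hclAP e)
  have hbase : M.IsBase (I ∪ P) := hindep.isBase_of_ground_subset_closure hspan
  have hbasis : M.IsBasis (I ∪ P) Set.univ := by
    have := hbase.isBasis_ground
    rwa [hE] at this
  have hrkU : rk M Set.univ = (I ∪ P).ncard :=
    rk_eq_ncard_basis (by rw [hE]) hbasis
  have hrkA : rk M A = I.ncard := rk_eq_ncard_basis hAE hI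
  have hdisj : Disjoint I P := by
    rw [disjoint_left]
    intro x hxI hxP
    exact (hPmem x hxP).1 (hI.subset hxI)
  have hcard : (I ∪ P).ncard = I.ncard + P.ncard :=
    ncard_union_eq hdisj (toFinite _) (toFinite _)
  rw [hrkU, hrkA, hcard]
  omega
end

section
/- Let M be a matroid on a finite linearly ordered ground set E and A ⊆ E. Define Q_M(A) as the set of elements e ∈ A such that e is the smallest element of some circuit of M contained in A. Then |Q_M(A)| = |A| − r_M(A), the nullity of A. -/
open Set

lemma exists_circuit_subset {α : Type*} [Fintype α] (M : Matroid α) {D : Set α}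
    (hD : ¬ M.Indep D) : ∃ C ⊆ D, IsCircuit M C := by
  classical
  set S : Set (Set α) := {X | X ⊆ D ∧ ¬ M.Indep X} with hS
  have hSne : D ∈ S := ⟨Subset.rfl, hD⟩
  obtain ⟨C, hCS, hCmin⟩ : ∃ C ∈ S, ∀ a ∈ S, id a ≤ id C → id C = id a := by
    obtain ⟨C, hC, h⟩ := S.toFinite.exists_minimalFor id S ⟨D, hSne⟩
    exact ⟨C, hC, fun a ha hle => le_antisymm (h ha hle) hle⟩
  refine ⟨C, hCS.1, hCS.2, fun x hx => ?_⟩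
  by_contra hxi
  have hmem : C \ {x} ∈ S := ⟨(diff_subset).trans hCS.1, hxi⟩
  have := hCmin _ hmem (diff_subset)
  simp only [id] at this
  exact (this ▸ hx : x ∈ C \ {x}).2 rfl

theorem nullity_eq_card_Qset' {α : Type*} [Fintype α] [LinearOrder α]
    (M : Matroid α) (hE : M.E = Set.univ) (A : Set α) :
    (Qset M A).ncard = A.ncard - rk M A := by
  classical
  set Q := Qset M A with hQdef
  have hQA : Q ⊆ A := fun e he => he.1
  set B := A \ Q with hBdef
  have hBA : B ⊆ A := diff_subset
  have hAE : A ⊆ M.E := by rw [hE]; exact subset_univ _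
  -- B is independent
  have hBindep : M.Indep B := by
    by_contra h
    obtain ⟨C, hCB, hCdep, hCmin⟩ := exists_circuit_subset M h
    have hCne : C.Nonempty := by
      rcases C.eq_empty_or_nonempty with rfl | h'
      · exact absurd M.empty_indep hCdep
      · exact h'
    obtain ⟨e, heC, hmin⟩ := Set.exists_min_image C id C.toFinite hCne
    have heQ : e ∈ Q := ⟨hBA (hCB heC), C, ⟨hCdep, hCmin⟩, hCB.trans hBA, heC, hmin⟩
    exact (hCB heC).2 heQ
  -- A is spanned by B
  have hwf : WellFounded ((· > ·) : α → α → Prop) := IsWellFounded.wf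
  have hclA : ∀ e, e ∈ A → e ∈ M.closure B := by
    intro e
    refine hwf.induction (C := fun e => e ∈ A → e ∈ M.closure B) e (fun e ih he => ?_)
    by_cases heQ : e ∈ Q
    · obtain ⟨-, C, ⟨hCdep, hCmin⟩, hCA, heC, hmin⟩ := heQ
      have hi : M.Indep (C \ {e}) := hCmin e heC
      have hins : ¬ M.Indep (insert e (C \ {e})) := by
        rwa [insert_diff_singleton, insert_eq_of_mem heC]
      have hecl : e ∈ M.closure (C \ {e}) := by
        have := hi.insert_indep_iff_of_notMem (fun h => h.2 rfl)
        rw [this] at hins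
        rw [hE] at hins
        simpa using hins
      have hsub : C \ {e} ⊆ M.closure B := by
        intro f hf
        exact ih f (lt_of_le_of_ne (hmin f hf.1) (fun h => hf.2 h.symm)) (hCA hf.1)
      exact M.closure_subset_closure_of_subset_closure hsub hecl
    · exact M.mem_closure_of_mem' ⟨he, heQ⟩ (by rw [hE]; exact mem_univ e)
  have hbasis : M.IsBasis B A := hBindep.isBasis_of_subset_of_subset_closure hBA hclA
  -- rk M A = B.ncard
  have hrk : rk M A = B.ncard := by
    have hub : ∀ n ∈ Set.ncard '' {I | I ⊆ A ∧ M.Indep I}, n ≤ B.ncard := by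
      rintro n ⟨I, ⟨hIA, hI⟩, rfl⟩
      obtain ⟨J, hJ, hIJ⟩ := hI.subset_isBasis_of_subset hIA hAE
      have hJB : J.ncard = B.ncard := by
        have := hJ.encard_eq_encard hbasis
        simp [Set.ncard_def, this]
      calc I.ncard ≤ J.ncard := Set.ncard_le_ncard hIJ J.toFinite
        _ = B.ncard := hJB
    have hmem : B.ncard ∈ Set.ncard '' {I | I ⊆ A ∧ M.Indep I} :=
      ⟨B, ⟨hBA, hBindep⟩, rfl⟩
    exact le_antisymm (csSup_le ⟨_, hmem⟩ hub) (le_csSup ⟨B.ncard, hub⟩ hmem)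
  have hQeq : Q = A \ B := by
    rw [hBdef, Set.diff_diff_cancel_left hQA]
  rw [hQeq, hrk, Set.ncard_diff hBA B.toFinite]

theorem nullity_eq_card_Qset {α : Type*} [Fintype α] [LinearOrder α]
    (M : Matroid α) (hE : M.E = Set.univ) (A : Set α) :
    (Qset M A).ncard = A.ncard - rk M A := nullity_eq_card_Qset' M hE A
end

section
/- Let M be a matroid on a finite linearly ordered set E, A ⊆ E, and let e be externally active for A, i.e., e ∈ E \ A is the smallest element of some circuit of M contained in A ∪ {e}. Then there is a unique circuit C of M with smallest element e such that e ∈ C ⊆ (A \ Q_M(A)) ∪ {e}, where Q_M(A) = {x ∈ A : x is smallest in some circuit of M contained in A}. -/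
open Set

set_option linter.unusedSectionVars false
set_option linter.unusedVariables false

section Aux

variable {α : Type*} [Fintype α] {M : Matroid α} {C D I A : Set α} {e x : α}

lemma aux_exists_circuit (hdep : ¬ M.Indep D) : ∃ C ⊆ D, IsCircuit M C := by
  classical
  have main : ∀ n (D : Set α), D.ncard ≤ n → ¬ M.Indep D → ∃ C ⊆ D, IsCircuit M C := by
    intro n
    induction n with
    | zero =>
      intro D hcard hdep
      rw [Nat.le_zero, Set.ncard_eq_zero (toFinite D)] at hcard
      exact absurd (hcard ▸ M.empty_indep) hdep
    | succ n ih =>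
      intro D hcard hdep
      by_cases h : ∀ x ∈ D, M.Indep (D \ {x})
      · exact ⟨D, subset_rfl, hdep, h⟩
      · push_neg at h
        obtain ⟨x, hx, hxd⟩ := h
        obtain ⟨C, hC1, hC2⟩ := ih (D \ {x})
          (by have := Set.ncard_diff_singleton_lt_of_mem hx (toFinite D); omega) hxd
        exact ⟨C, hC1.trans diff_subset, hC2⟩
  exact main D.ncard D le_rfl hdep

lemma aux_circuit_closure (hE : M.E = Set.univ) (hC : IsCircuit M C) (hx : x ∈ C) :
    x ∈ M.closure (C \ {x}) := by
  have hI := hC.2 x hx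
  have hdep : M.Dep (insert x (C \ {x})) := by
    rw [insert_diff_singleton, insert_eq_of_mem hx]
    exact ⟨hC.1, by rw [hE]; exact subset_univ _⟩
  exact (hI.insert_dep_iff.1 hdep).1

variable [LinearOrder α]

lemma aux_circuit_nonempty (hC : IsCircuit M C) : C.Nonempty := by
  rw [nonempty_iff_ne_empty]
  rintro rfl
  exact hC.1 M.empty_indep

lemma aux_min_mem_Qset (hC : IsCircuit M C) (hCA : C ⊆ A) :
    ∃ m ∈ C, m ∈ Qset M A := by
  have hwf : WellFounded ((· < ·) : α → α → Prop) :=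
    Finite.wellFounded_of_trans_of_irrefl _
  obtain ⟨m, hm⟩ := aux_circuit_nonempty hC
  refine ⟨hwf.min C ⟨m, hm⟩, hwf.min_mem C ⟨m, hm⟩, hCA (hwf.min_mem C ⟨m, hm⟩), C, hC, hCA,
    hwf.min_mem C ⟨m, hm⟩, fun f hf => ?_⟩
  exact le_of_not_gt (hwf.not_lt_min C hf)

lemma aux_diff_Qset_indep (hE : M.E = Set.univ) (A : Set α) : M.Indep (A \ Qset M A) := by
  by_contra hdep
  obtain ⟨C, hCA, hC⟩ := aux_exists_circuit hdep
  obtain ⟨m, hmC, hmQ⟩ := aux_min_mem_Qset hC (hCA.trans diff_subset)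
  exact (hCA hmC).2 hmQ

lemma aux_mem_closure_gt (hE : M.E = Set.univ) (A : Set α) (t : α) :
    ∀ a, a ∈ A → t < a → a ∈ M.closure ((A \ Qset M A) ∩ Set.Ioi t) := by
  have hwf : WellFounded ((· > ·) : α → α → Prop) :=
    Finite.wellFounded_of_trans_of_irrefl _
  intro a
  refine hwf.induction (C := fun a => a ∈ A → t < a → a ∈ M.closure ((A \ Qset M A) ∩ Set.Ioi t))
    a (fun x ih hx htx => ?_)
  by_cases hq : x ∈ Qset M A
  · obtain ⟨-, D, hD, hDA, hxD, hxmin⟩ := hq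
    have h1 : x ∈ M.closure (D \ {x}) := aux_circuit_closure hE hD hxD
    have h2 : D \ {x} ⊆ M.closure ((A \ Qset M A) ∩ Set.Ioi t) := by
      rintro b ⟨hbD, hbx⟩
      have hxb : x < b := lt_of_le_of_ne (hxmin b hbD) (Ne.symm hbx)
      exact ih b hxb (hDA hbD) (htx.trans hxb)
    exact M.closure_subset_closure_of_subset_closure h2 h1
  · exact M.subset_closure _ (by rw [hE]; exact subset_univ _) ⟨⟨hx, hq⟩, htx⟩

lemma aux_fund_circuit_unique (hE : M.E = Set.univ) (hI : M.Indep I) (heI : e ∉ I)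
    (hC : IsCircuit M C) (heC : e ∈ C) (hCI : C ⊆ insert e I)
    (hD : IsCircuit M D) (heD : e ∈ D) (hDI : D ⊆ insert e I) : C = D := by
  have key : ∀ C, IsCircuit M C → e ∈ C → C ⊆ insert e I →
      ∀ x ∈ I, (x ∈ C ↔ e ∉ M.closure (I \ {x})) := by
    intro C hC heC hCI x hxI
    constructor
    · intro hxC hecl
      have hxe : x ≠ e := fun h => heI (h ▸ hxI)
      have h1 : x ∈ M.closure (C \ {x}) := aux_circuit_closure hE hC hxC
      have h2 : C \ {x} ⊆ insert e (I \ {x}) := by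
        rintro b ⟨hbC, hbx⟩
        rcases hCI hbC with h | h
        · exact Or.inl h
        · exact Or.inr ⟨h, hbx⟩
      have h3 : M.closure (insert e (I \ {x})) = M.closure (I \ {x}) :=
        Matroid.closure_insert_eq_of_mem_closure hecl
      have h4 : x ∈ M.closure (I \ {x}) := h3 ▸ (M.closure_subset_closure h2 h1)
      exact hI.notMem_closure_sdiff_of_mem hxI h4
    · intro hecl
      by_contra hxC
      have h1 : e ∈ M.closure (C \ {e}) := aux_circuit_closure hE hC heC
      have h2 : C \ {e} ⊆ I \ {x} := by
        rintro b ⟨hbC, hbe⟩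
        rcases hCI hbC with h | h
        · exact absurd h hbe
        · exact ⟨h, fun hbx => hxC (hbx ▸ hbC)⟩
      exact hecl (M.closure_subset_closure h2 h1)
  ext x
  by_cases hxe : x = e
  · subst hxe; simp [heC, heD]
  · constructor
    · intro hxC
      have hxI : x ∈ I := (hCI hxC).resolve_left hxe
      exact (key D hD heD hDI x hxI).2 ((key C hC heC hCI x hxI).1 hxC)
    · intro hxD
      have hxI : x ∈ I := (hDI hxD).resolve_left hxe
      exact (key C hC heC hCI x hxI).2 ((key D hD heD hDI x hxI).1 hxD)

end Aux

theorem externally_active_unique_circuit {α : Type*} [Fintype α] [LinearOrder α]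
    (M : Matroid α) (hE : M.E = Set.univ) (A : Set α) (e : α)
    (he : e ∈ ExtSet M A) :
    ∃! C : Set α, IsCircuit M C ∧ SmallestIn e C ∧ C ⊆ (A \ Qset M A) ∪ {e} := by

  simp only [ExtSet, Set.mem_setOf_eq] at he
  obtain ⟨heA, C₀, hC₀, hC₀A, he0, hmin0⟩ := he
  set Q := Qset M A with hQ
  set S : Set α := (A \ Q) ∩ Set.Ioi e with hS
  have hIindep : M.Indep (A \ Q) := aux_diff_Qset_indep hE A
  have hSindep : M.Indep S := hIindep.subset inter_subset_left
  have hecl : e ∈ M.closure S := by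
    have h1 : e ∈ M.closure (C₀ \ {e}) := aux_circuit_closure hE hC₀ he0
    have h2 : C₀ \ {e} ⊆ M.closure S := by
      rintro b ⟨hbC, hbe⟩
      have hbA : b ∈ A := by
        rcases hC₀A hbC with h | h
        · exact h
        · exact absurd h hbe
      have heb : e < b := lt_of_le_of_ne (hmin0 b hbC) (Ne.symm hbe)
      exact aux_mem_closure_gt hE A e b hbA heb
    exact M.closure_subset_closure_of_subset_closure h2 h1
  have heS : e ∉ S := fun h => lt_irrefl e h.2
  have hdep : M.Dep (insert e S) := hSindep.insert_dep_iff.2 ⟨hecl, heS⟩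
  obtain ⟨C, hCS, hC⟩ := aux_exists_circuit hdep.1
  have heC : e ∈ C := by
    by_contra heC
    exact hC.1 (hSindep.subset (fun b hb => (hCS hb).resolve_left (fun h => heC (h ▸ hb))))
  have hsm : SmallestIn e C := by
    refine ⟨heC, fun f hf => ?_⟩
    rcases hCS hf with h | h
    · exact h.ge
    · exact h.2.le
  have hCsub : C ⊆ (A \ Q) ∪ {e} := by
    rw [union_singleton]
    exact hCS.trans (insert_subset_insert inter_subset_left)
  refine ⟨C, ⟨hC, hsm, hCsub⟩, ?_⟩
  rintro C' ⟨hC', hsm', hC'sub⟩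
  have heA' : e ∉ A \ Q := fun h => heA h.1
  refine aux_fund_circuit_unique hE hIindep heA' hC' hsm'.1 ?_ hC heC ?_
  · rwa [union_singleton] at hC'sub
  · exact hCS.trans (insert_subset_insert inter_subset_left)
end

section
/- Let M be a matroid on a finite linearly ordered set E, A ⊆ E, and e ∈ Ext_M(A) ∪ Q_M(A), i.e., e is the smallest element of some circuit of M contained in A ∪ {e}. Then there exists a circuit C of M with smallest element e such that e ∈ C ⊆ (A \ Q_M(A)) ∪ {e}. -/
open Set

section Helpers

variable {α : Type*} [Fintype α] {M : Matroid α}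

/-- Every element of a circuit is in the closure of the rest. -/
lemma circuit_mem_closure_diff (hE : M.E = Set.univ) {C : Set α} (hC : IsCircuit M C)
    {x : α} (hx : x ∈ C) : x ∈ M.closure (C \ {x}) := by
  have hI : M.Indep (C \ {x}) := hC.2 x hx
  have hdep : M.Dep (insert x (C \ {x})) := by
    rw [Set.insert_diff_singleton, Set.insert_eq_of_mem hx]
    exact ⟨hC.1, by rw [hE]; exact Set.subset_univ _⟩
  exact ((hI.insert_dep_iff).mp hdep).1

/-- A finite dependent set contains a circuit. -/
lemma dep_contains_circuit (hE : M.E = Set.univ) {D : Set α} (hD : ¬ M.Indep D) :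
    ∃ C, IsCircuit M C ∧ C ⊆ D := by
  obtain ⟨C, hCD, hCmin⟩ := exists_minimal_le_of_wellFoundedLT (fun S => ¬ M.Indep S) D hD
  refine ⟨C, ⟨hCmin.1, fun y hy => ?_⟩, hCD⟩
  by_contra hind
  have := hCmin.2 hind (Set.diff_subset)
  exact (this hy).2 rfl

/-- If `x ∈ cl S`, `x ∉ S`, then some circuit through `x` lies in `insert x S`. -/
lemma mem_closure_exists_circuit (hE : M.E = Set.univ) {S : Set α} {x : α}
    (hx : x ∈ M.closure S) (hxS : x ∉ S) :
    ∃ C, IsCircuit M C ∧ x ∈ C ∧ C ⊆ insert x S := by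
  obtain ⟨I, hI⟩ := M.exists_isBasis S (by rw [hE]; exact Set.subset_univ _)
  have hxI : x ∈ M.closure I := by rwa [hI.closure_eq_closure]
  have hxnI : x ∉ I := fun h => hxS (hI.subset h)
  have hdep : M.Dep (insert x I) := (hI.indep.mem_closure_iff_of_notMem hxnI).mp hxI
  obtain ⟨C, hC, hCsub⟩ := dep_contains_circuit hE hdep.1
  have hxC : x ∈ C := by
    by_contra hxC
    exact hC.1 (hI.indep.subset (fun y hy => ((hCsub hy).resolve_left (fun h => hxC (h ▸ hy)))))
  exact ⟨C, hC, hxC, hCsub.trans (Set.insert_subset_insert hI.subset)⟩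

end Helpers

theorem active_exists_circuit_avoiding_Qset {α : Type*} [Fintype α] [LinearOrder α]
    (M : Matroid α) (hE : M.E = Set.univ) (A : Set α) (e : α)
    (he : e ∈ ExtSet M A ∪ Qset M A) :
    ∃ C : Set α, IsCircuit M C ∧ SmallestIn e C ∧ C ⊆ (A \ Qset M A) ∪ {e} := by
  -- extract a circuit C ⊆ A ∪ {e} with smallest element e
  obtain ⟨C, hC, hCsub, hCsm⟩ : ∃ C, IsCircuit M C ∧ C ⊆ A ∪ {e} ∧ SmallestIn e C := by
    rcases he with ⟨-, C, hC, hsub, hsm⟩ | ⟨-, C, hC, hsub, hsm⟩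
    · exact ⟨C, hC, hsub, hsm⟩
    · exact ⟨C, hC, hsub.trans (Set.subset_union_left), hsm⟩
  set S : Set α := {x | x ∈ A ∧ x ∉ Qset M A ∧ e < x} with hS
  -- key claim by downward induction
  have key : ∀ f : α, e < f → f ∈ A → f ∈ M.closure S := by
    intro f
    refine (wellFounded_gt (α := α)).induction
      (C := fun f => e < f → f ∈ A → f ∈ M.closure S) f (fun f ih hef hfA => ?_)
    by_cases hfQ : f ∈ Qset M A
    · obtain ⟨-, D, hD, hDsub, hDsm⟩ := hfQ
      have hDcl : D \ {f} ⊆ M.closure S := by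
        rintro g ⟨hgD, hgf⟩
        have hfg : f < g := lt_of_le_of_ne (hDsm.2 g hgD) (fun h => hgf (h ▸ rfl))
        exact ih g hfg (hef.trans hfg) (hDsub hgD)
      have : f ∈ M.closure (D \ {f}) := circuit_mem_closure_diff hE hD hDsm.1
      exact (M.closure_subset_closure_of_subset_closure hDcl) this
    · exact M.subset_closure S (by rw [hE]; exact Set.subset_univ _) ⟨hfA, hfQ, hef⟩
  -- e is in closure of S
  have heS : e ∉ S := fun h => lt_irrefl e h.2.2
  have hecl : e ∈ M.closure S := by
    have hCcl : C \ {e} ⊆ M.closure S := by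
      rintro g ⟨hgC, hge⟩
      have hge' : e < g := lt_of_le_of_ne (hCsm.2 g hgC) (fun h => hge (h ▸ rfl))
      have hgA : g ∈ A := by
        rcases hCsub hgC with h | h
        · exact h
        · exact absurd h hge
      exact key g hge' hgA
    exact (M.closure_subset_closure_of_subset_closure hCcl)
      (circuit_mem_closure_diff hE hC hCsm.1)
  obtain ⟨C', hC', heC', hC'sub⟩ := mem_closure_exists_circuit hE hecl heS
  refine ⟨C', hC', ⟨heC', fun g hg => ?_⟩, fun g hg => ?_⟩
  · rcases hC'sub hg with h | h
    · exact h.ge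
    · exact (h.2.2).le
  · rcases hC'sub hg with h | h
    · exact Or.inr h
    · exact Or.inl ⟨h.1, h.2.1⟩
end

section
/- Two matroids M and M' on the same finite ground set E satisfy the quotient condition (every flat of M' is a flat of M) if and only if no circuit of M and cocircuit of M' intersect in exactly one element. -/
open Set

section Aux

variable {α : Type*} {M : Matroid α} {C D F X : Set α} {e : α}

/-- Any dependent set contains a circuit (finite case). -/
lemma aux_exists_circuit_subset_of_dep [Fintype α] (M : Matroid α) :
    ∀ n (D : Set α), D.ncard ≤ n → ¬ M.Indep D → ∃ C, C ⊆ D ∧ IsCircuit M C := by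
  intro n
  induction n with
  | zero =>
    intro D hcard hdep
    have hD : D = ∅ := by
      have := Set.ncard_eq_zero (D.toFinite) |>.mp (Nat.le_zero.mp hcard)
      exact this
    exact absurd (hD ▸ M.empty_indep) hdep
  | succ n ih =>
    intro D hcard hdep
    by_cases h : ∀ x ∈ D, M.Indep (D \ {x})
    · exact ⟨D, Subset.rfl, hdep, h⟩
    · push_neg at h
      obtain ⟨x, hxD, hx⟩ := h
      have hlt : (D \ {x}).ncard ≤ n := by
        have := Set.ncard_diff_singleton_lt_of_mem hxD D.toFinite
        omega
      obtain ⟨C, hCsub, hC⟩ := ih (D \ {x}) hlt hx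
      exact ⟨C, hCsub.trans diff_subset, hC⟩

lemma aux_circuit_mem_closure (hC : IsCircuit M C) (hCE : C ⊆ M.E) (he : e ∈ C) :
    e ∈ M.closure (C \ {e}) := by
  have hI : M.Indep (C \ {e}) := hC.2 e he
  have heI : e ∉ C \ {e} := by simp
  rw [hI.mem_closure_iff_of_notMem heI]
  have : insert e (C \ {e}) = C := by
    rw [Set.insert_diff_singleton, Set.insert_eq_of_mem he]
  rw [this]
  exact ⟨hC.1, hCE⟩

lemma aux_exists_circuit_of_mem_closure [Fintype α] (hE : M.E = Set.univ)
    (he : e ∈ M.closure X) (heX : e ∉ X) :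
    ∃ C, IsCircuit M C ∧ e ∈ C ∧ C ⊆ insert e X := by
  obtain ⟨I, hI⟩ := M.exists_isBasis X (by rw [hE]; exact subset_univ _)
  have heI : e ∉ I := fun h => heX (hI.subset h)
  have hecl : e ∈ M.closure I := by rwa [hI.closure_eq_closure]
  have hdep : ¬ M.Indep (insert e I) := by
    intro hind
    have := (hI.indep.insert_indep_iff_of_notMem heI).mp hind
    exact this.2 hecl
  obtain ⟨C, hCsub, hC⟩ :=
    aux_exists_circuit_subset_of_dep M (insert e I).ncard (insert e I) le_rfl hdep
  refine ⟨C, hC, ?_, hCsub.trans (insert_subset_insert hI.subset)⟩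
  by_contra heC
  have hCI : C ⊆ I := fun x hx => ((hCsub hx).resolve_left (fun h => heC (h ▸ hx)))
  exact hC.1 (hI.indep.subset hCI)

lemma aux_flat_of_closure_subset (h : M.closure F ⊆ F) (hFE : F ⊆ M.E) : M.IsFlat F := by
  refine ⟨fun I X hIF hIX => ?_, hFE⟩
  have h1 : X ⊆ M.closure I := hIX.subset_closure
  rw [hIF.closure_eq_closure] at h1
  exact h1.trans h

lemma aux_closure_flat (M : Matroid α) (X : Set α) : M.IsFlat (M.closure X) :=
  aux_flat_of_closure_subset (by rw [M.closure_closure]) (M.closure_subset_ground X)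

lemma aux_compl_spanning_iff (hE : M.E = Set.univ) (D : Set α) :
    M✶.Indep D ↔ M.Spanning Dᶜ := by
  have h1 : M.Coindep D ↔ M.Spanning (M.E \ D) :=
    Matroid.coindep_iff_compl_spanning (by rw [hE]; exact subset_univ _)
  rw [Matroid.coindep_def] at h1
  rw [h1, hE]
  congr! 1
  ext x; simp

lemma aux_cocircuit_compl_flat (hE : M.E = Set.univ) (hD : IsCocircuit M D) :
    M.IsFlat Dᶜ := by
  refine aux_flat_of_closure_subset ?_ (by rw [hE]; exact subset_univ _)
  intro f hf
  by_contra hfD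
  rw [Set.notMem_compl_iff] at hfD
  have hsp : M.Spanning (D \ {f})ᶜ := (aux_compl_spanning_iff hE _).mp (hD.2 f hfD)
  have hins : (D \ {f})ᶜ = insert f Dᶜ := by ext x; by_cases hx : x = f <;> simp [hx]
  rw [hins] at hsp
  have hcl : M.closure (insert f Dᶜ) = M.closure Dᶜ :=
    Matroid.closure_insert_eq_of_mem_closure hf
  have hsp2 : M.Spanning Dᶜ := by
    rw [Matroid.spanning_iff_closure_eq (by rw [hE]; exact subset_univ _)] at hsp ⊢
    rw [← hcl]; exact hsp
  exact hD.1 ((aux_compl_spanning_iff hE D).mpr (by simpa using hsp2))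

lemma aux_exists_cocircuit [Fintype α] (hE : M.E = Set.univ) (hF : M.IsFlat F)
    (he : e ∉ F) : ∃ D, IsCocircuit M D ∧ e ∈ D ∧ D ⊆ Fᶜ := by
  classical
  set S : Set (Set α) := {H | M.IsFlat H ∧ F ⊆ H ∧ e ∉ H} with hS
  have hFS : F ∈ S := ⟨hF, Subset.rfl, he⟩
  obtain ⟨H, hHS, hHmax⟩ :=
    Set.Finite.exists_maximalFor id S (Set.toFinite S) ⟨F, hFS⟩
  obtain ⟨hHflat, hFH, heH⟩ := hHS
  -- every element outside H spans e over H
  have hcl : ∀ x ∉ H, e ∈ M.closure (insert x H) := by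
    intro x hxH
    by_contra hecl
    have hK : M.closure (insert x H) ∈ S :=
      ⟨aux_closure_flat M _, hFH.trans ((subset_insert _ _).trans
        (M.subset_closure _ (by rw [hE]; exact subset_univ _))), hecl⟩
    have hHK : H ⊆ M.closure (insert x H) :=
      (subset_insert _ _).trans (M.subset_closure _ (by rw [hE]; exact subset_univ _))
    have heq : H = M.closure (insert x H) := subset_antisymm hHK (hHmax hK hHK)
    exact hxH (heq ▸ (M.subset_closure (insert x H)
      (by rw [hE]; exact subset_univ _) (mem_insert _ _)))
  have heclH : e ∉ M.closure H := by rwa [hHflat.closure]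
  -- insert e H spans everything
  have hspan : M.closure (insert e H) = Set.univ := by
    apply subset_antisymm (by rw [← hE]; exact M.closure_subset_ground _)
    intro y _
    by_cases hyH : y ∈ H
    · exact M.subset_closure _ (by rw [hE]; exact subset_univ _) (mem_insert_of_mem _ hyH)
    · exact (Matroid.closure_exchange ⟨hcl y hyH, heclH⟩).1
  have hspanx : ∀ x ∉ H, M.closure (insert x H) = Set.univ := by
    intro x hxH
    apply subset_antisymm (by rw [← hE]; exact M.closure_subset_ground _)
    have h1 : M.closure (insert e (insert x H)) = M.closure (insert x H) :=
      Matroid.closure_insert_eq_of_mem_closure (hcl x hxH)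
    rw [← h1, ← hspan]
    exact M.closure_subset_closure (insert_subset_insert (subset_insert _ _))
  refine ⟨Hᶜ, ⟨?_, ?_⟩, heH, compl_subset_compl.mpr hFH⟩
  · intro hind
    have hsp := (aux_compl_spanning_iff hE _).mp hind
    rw [compl_compl] at hsp
    rw [Matroid.spanning_iff_closure_eq (by rw [hE]; exact subset_univ _),
      hHflat.closure, hE] at hsp
    exact heH (hsp ▸ mem_univ e)
  · intro x hx
    rw [aux_compl_spanning_iff hE]
    have hins : (Hᶜ \ {x})ᶜ = insert x H := by
      ext y; by_cases hy : y = x <;> simp [hy, hx]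
    rw [hins, Matroid.spanning_iff_closure_eq (by rw [hE]; exact subset_univ _),
      hspanx x hx, hE]

end Aux

theorem quotient_iff_no_circuit_cocircuit_single_intersection {α : Type*} [Fintype α]
    (M M' : Matroid α) (hE : M.E = Set.univ) (hE' : M'.E = Set.univ) :
    (∀ F : Set α, M'.IsFlat F → M.IsFlat F) ↔
      (∀ C D : Set α, IsCircuit M C → IsCocircuit M' D → (C ∩ D).ncard ≠ 1) := by
  constructor
  · intro hflat C D hC hD hcard
    obtain ⟨e, he⟩ := Set.ncard_eq_one.mp hcard
    have heCD : e ∈ C ∩ D := by rw [he]; exact rfl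
    have hflatD : M.IsFlat Dᶜ := hflat _ (aux_cocircuit_compl_flat hE' hD)
    have hsub : C \ {e} ⊆ Dᶜ := by
      rintro x ⟨hxC, hxe⟩ hxD
      have : x ∈ ({e} : Set α) := he ▸ (⟨hxC, hxD⟩ : x ∈ C ∩ D)
      exact hxe this
    have hecl : e ∈ M.closure (C \ {e}) :=
      aux_circuit_mem_closure hC (by rw [hE]; exact subset_univ _) heCD.1
    have : e ∈ Dᶜ := by
      have := (M.closure_subset_closure hsub) hecl
      rwa [hflatD.closure] at this
    exact this heCD.2
  · intro h F hF
    refine aux_flat_of_closure_subset ?_ (by rw [hE]; exact subset_univ _)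
    intro e he
    by_contra heF
    obtain ⟨C, hC, heC, hCsub⟩ := aux_exists_circuit_of_mem_closure hE he heF
    obtain ⟨D, hD, heD, hDsub⟩ := aux_exists_cocircuit hE' hF heF
    apply h C D hC hD
    have : C ∩ D = {e} := by
      apply subset_antisymm
      · rintro x ⟨hxC, hxD⟩
        rcases hCsub hxC with h1 | h1
        · exact h1
        · exact absurd h1 (hDsub hxD)
      · rintro x rfl; exact ⟨heC, heD⟩
    rw [this, Set.ncard_singleton]
end

section
/- Let M → M' be a matroid perspective on a finite linearly ordered set E, A ⊆ E, and B = (A ∪ P_{M'}(A)) \ Q_M(A). Then B \ Int_{M'}(B) ⊆ A ⊆ B ∪ Ext_M(B), where Int_{M'}(B) is the set of internally active elements of B in M' and Ext_M(B) is the set of externally active elements of B in M. -/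
open Set

/-- An active element is in `S` and in the closure of the larger elements of `S`. -/
lemma act_spec {α : Type*} [LinearOrder α] {N : Matroid α} (hN : N.E = Set.univ)
    {S : Set α} {e : α} (he : ∃ C, IsCircuit N C ∧ C ⊆ S ∧ SmallestIn e C) :
    e ∈ S ∧ e ∈ N.closure (S ∩ Set.Ioi e) := by
  obtain ⟨C, ⟨hdep, hmin⟩, hCS, heC, hsm⟩ := he
  have hind : N.Indep (C \ {e}) := hmin e heC
  have hsub : C \ {e} ⊆ S ∩ Set.Ioi e := by
    rintro x ⟨hxC, hxe⟩
    exact ⟨hCS hxC, lt_of_le_of_ne (hsm x hxC) (fun h => hxe (by simp [h.symm]))⟩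
  have hecl : e ∈ N.closure (C \ {e}) := by
    rw [hind.mem_closure_iff_of_notMem (by simp)]
    refine ⟨?_, by rw [hN]; exact Set.subset_univ _⟩
    rwa [Set.insert_diff_singleton, Set.insert_eq_of_mem heC]
  exact ⟨hCS heC, N.closure_subset_closure hsub hecl⟩

/-- Extract a minimal subset whose closure still contains `e`. -/
lemma exists_minimal_closure {α : Type*} [Fintype α] (N : Matroid α) (e : α) :
    ∀ n (I : Set α), I.ncard ≤ n → N.Indep I → e ∈ N.closure I →
    ∃ I', I' ⊆ I ∧ N.Indep I' ∧ e ∈ N.closure I' ∧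
      ∀ x ∈ I', e ∉ N.closure (I' \ {x}) := by
  intro n
  induction n with
  | zero =>
    intro I hcard hI he
    have hI0 : I = ∅ := by
      rw [← Set.ncard_eq_zero (Set.toFinite I)]; omega
    exact ⟨I, Subset.rfl, hI, he, fun x hx => by simp [hI0] at hx⟩
  | succ n ih =>
    intro I hcard hI he
    by_cases h : ∀ x ∈ I, e ∉ N.closure (I \ {x})
    · exact ⟨I, Subset.rfl, hI, he, h⟩
    · push_neg at h
      obtain ⟨x, hxI, hx⟩ := h
      have hlt : (I \ {x}).ncard < I.ncard :=
        Set.ncard_diff_singleton_lt_of_mem hxI (Set.toFinite I)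
      obtain ⟨I', hsub, hI', he', hmin⟩ :=
        ih (I \ {x}) (by omega) (hI.subset Set.diff_subset) hx
      exact ⟨I', hsub.trans Set.diff_subset, hI', he', hmin⟩

/-- Key lemma: if `e` is smallest in some circuit contained in `S`, there is such a
circuit all of whose other elements are inactive. -/
lemma act_exists_good {α : Type*} [Fintype α] [LinearOrder α] {N : Matroid α}
    (hN : N.E = Set.univ) {S : Set α} {e : α}
    (he : ∃ C, IsCircuit N C ∧ C ⊆ S ∧ SmallestIn e C) :
    ∃ D, IsCircuit N D ∧ D ⊆ S ∧ SmallestIn e D ∧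
      ∀ f ∈ D, f ≠ e → ¬ ∃ C, IsCircuit N C ∧ C ⊆ S ∧ SmallestIn f C := by
  obtain ⟨heS, hecl⟩ := act_spec hN he
  set G : Set α := (S ∩ Set.Ioi e) \ {f | ∃ C, IsCircuit N C ∧ C ⊆ S ∧ SmallestIn f C}
    with hGdef
  have hGground : G ⊆ N.E := by rw [hN]; exact Set.subset_univ _
  -- every element of S greater than e lies in the closure of G
  have main : ∀ n (y : α), (S ∩ Set.Ioi y).ncard < n → y ∈ S → e < y →
      y ∈ N.closure G := by
    intro n
    induction n with
    | zero => intro y hy; omega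
    | succ n ih =>
      intro y hcard hyS hey
      by_cases hyA : y ∈ {f | ∃ C, IsCircuit N C ∧ C ⊆ S ∧ SmallestIn f C}
      · have hycl : y ∈ N.closure (S ∩ Set.Ioi y) := (act_spec hN hyA).2
        refine Matroid.closure_subset_closure_of_subset_closure ?_ hycl
        rintro z ⟨hzS, hzy⟩
        refine ih z ?_ hzS (hey.trans hzy)
        have hss : S ∩ Set.Ioi z ⊂ S ∩ Set.Ioi y := by
          constructor
          · rintro w ⟨hwS, hwz⟩; exact ⟨hwS, hzy.trans hwz⟩
          · intro hcon
            exact absurd (hcon ⟨hzS, hzy⟩).2 (lt_irrefl z)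
        have := Set.ncard_lt_ncard hss (Set.toFinite _)
        omega
      · exact N.subset_closure G hGground ⟨⟨hyS, hey⟩, hyA⟩
  have hFG : S ∩ Set.Ioi e ⊆ N.closure G := by
    rintro y ⟨hyS, hey⟩
    exact main ((S ∩ Set.Ioi y).ncard + 1) y (by omega) hyS hey
  have heG : e ∈ N.closure G :=
    Matroid.closure_subset_closure_of_subset_closure hFG hecl
  -- take a basis of G and minimize
  obtain ⟨I, hI⟩ := N.exists_isBasis G hGground
  have heI : e ∈ N.closure I := by rw [hI.closure_eq_closure]; exact heG
  obtain ⟨I', hI'I, hI'ind, heI', hminI'⟩ :=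
    exists_minimal_closure N e I.ncard I le_rfl hI.indep heI
  have hI'G : I' ⊆ G := hI'I.trans hI.subset
  have heI'mem : e ∉ I' := fun h => absurd (hI'G h).1.2 (lt_irrefl e)
  refine ⟨insert e I', ⟨?_, ?_⟩, ?_, ⟨Set.mem_insert _ _, ?_⟩, ?_⟩
  · -- dependent
    have : N.Dep (insert e I') := hI'ind.insert_dep_iff.mpr ⟨heI', heI'mem⟩
    exact this.1
  · -- deletions independent
    intro x hx
    rcases Set.mem_insert_iff.mp hx with rfl | hxI'
    · rwa [Set.insert_diff_self_of_notMem heI'mem]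
    · have hxe : x ≠ e := fun h => heI'mem (h ▸ hxI')
      rw [← Set.insert_diff_singleton_comm (fun h => hxe h.symm)]
      have hsubind : N.Indep (I' \ {x}) := hI'ind.subset Set.diff_subset
      rw [hsubind.insert_indep_iff_of_notMem (fun h => heI'mem h.1)]
      exact ⟨by rw [hN]; trivial, hminI' x hxI'⟩
  · -- contained in S
    rintro x hx
    rcases Set.mem_insert_iff.mp hx with rfl | hxI'
    · exact heS
    · exact (hI'G hxI').1.1
  · -- smallest
    intro f hf
    rcases Set.mem_insert_iff.mp hf with rfl | hfI'
    · exact le_rfl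
    · exact le_of_lt (hI'G hfI').1.2
  · -- others inactive
    intro f hf hfe hfact
    rcases Set.mem_insert_iff.mp hf with rfl | hfI'
    · exact hfe rfl
    · exact (hI'G hfI').2 hfact

theorem fMM'_interval_contains {α : Type*} [Fintype α] [LinearOrder α]
    (M M' : Matroid α) (hE : M.E = Set.univ) (hE' : M'.E = Set.univ)
    (h : Perspective M M') (A : Set α) :
    ((A ∪ Pset M' A) \ Qset M A) \ IntSet M' ((A ∪ Pset M' A) \ Qset M A) ⊆ A ∧
      A ⊆ ((A ∪ Pset M' A) \ Qset M A) ∪ ExtSet M ((A ∪ Pset M' A) \ Qset M A) := by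
  set B : Set α := (A ∪ Pset M' A) \ Qset M A with hBdef
  constructor
  · rintro e ⟨heB, heInt⟩
    by_contra heA
    have heP : e ∈ Pset M' A := by
      rcases heB.1 with h' | h'
      · exact absurd h' heA
      · exact h'
    have hN : (M'✶).E = Set.univ := by rw [Matroid.dual_ground, hE']
    obtain ⟨D, hDc, hDS, hDsm, hDact⟩ := act_exists_good hN heP.2
    refine heInt ⟨heB, D, hDc, ?_, hDsm⟩
    intro f hf
    by_cases hfe : f = e
    · exact Or.inr (by simp [hfe])
    · left
      intro hfB
      have hfA : f ∉ A := hDS hf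
      have hfP : f ∈ Pset M' A := by
        rcases hfB.1 with h' | h'
        · exact absurd h' hfA
        · exact h'
      exact hDact f hf hfe hfP.2
  · intro e heA
    by_cases heB : e ∈ B
    · exact Or.inl heB
    right
    have heQ : e ∈ Qset M A := by
      by_contra hq
      exact heB ⟨Or.inl heA, hq⟩
    obtain ⟨D, hDc, hDS, hDsm, hDact⟩ := act_exists_good hE heQ.2
    refine ⟨heB, D, hDc, ?_, hDsm⟩
    intro f hf
    by_cases hfe : f = e
    · exact Or.inr (by simp [hfe])
    · left
      have hfA : f ∈ A := hDS hf
      exact ⟨Or.inl hfA, fun hq => hDact f hf hfe hq.2⟩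
end

section
/- Let M → M' be a matroid perspective on a finite linearly ordered set E. Let B ⊆ E be independent in M and spanning in M', and let A ∈ [B \ Int_{M'}(B), B ∪ Ext_M(B)] (i.e., B \ Int_{M'}(B) ⊆ A ⊆ B ∪ Ext_M(B)). Then Int_{M'}(A) = Int_{M'}(B) ∩ A and P_{M'}(A) = Int_{M'}(B) \ A. -/
open Set

set_option linter.unusedSectionVars false

section Aux

variable {α : Type*} [Fintype α] {M' : Matroid α} (hE' : M'.E = Set.univ)

include hE'

lemma cocirc_iff {D : Set α} :
    IsCocircuit M' D ↔ ¬ M'.Spanning Dᶜ ∧ ∀ x ∈ D, M'.Spanning (Dᶜ ∪ {x}) := by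
  have hdual : ∀ S : Set α, M'✶.Indep S ↔ M'.Spanning Sᶜ := by
    intro S
    rw [show (M'✶).Indep S ↔ M'.Coindep S from Iff.rfl,
      Matroid.coindep_iff_compl_spanning (by rw [hE']; exact subset_univ S), hE']
    simp [compl_eq_univ_diff]
  constructor
  · rintro ⟨h1, h2⟩
    refine ⟨fun hs => h1 ((hdual D).2 hs), fun x hx => ?_⟩
    have := (hdual (D \ {x})).1 (h2 x hx)
    rwa [diff_eq, compl_inter, compl_compl] at this
  · rintro ⟨h1, h2⟩
    refine ⟨fun hi => h1 ((hdual D).1 hi), fun x hx => ?_⟩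
    rw [hdual, diff_eq, compl_inter, compl_compl]
    exact h2 x hx

lemma flat_compl {D : Set α} (hD : IsCocircuit M' D) : M'.closure Dᶜ = Dᶜ := by
  rw [cocirc_iff hE'] at hD
  refine subset_antisymm (fun y hy => ?_)
    (M'.subset_closure Dᶜ (by rw [hE']; exact subset_univ _))
  by_contra hyD
  rw [notMem_compl_iff] at hyD
  have hsp := hD.2 y hyD
  have : M'.closure (Dᶜ ∪ {y}) = M'.closure Dᶜ := by
    rw [union_singleton, Matroid.closure_insert_eq_of_mem_closure hy]
  exact hD.1 ((Matroid.spanning_iff_closure_eq (by rw [hE']; exact subset_univ _)).2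
    (by rw [← this, hsp.closure_eq]))

lemma not_mem_closure_of_cocirc {D X : Set α} {e : α} (hD : IsCocircuit M' D)
    (he : e ∈ D) (hX : X ⊆ Dᶜ) : e ∉ M'.closure X := fun hcl => by
  have := (M'.closure_subset_closure hX) hcl
  rw [flat_compl hE' hD] at this
  exact this he

lemma exists_cocirc {X : Set α} {e : α} (he : e ∉ M'.closure X) :
    ∃ D, IsCocircuit M' D ∧ e ∈ D ∧ Disjoint D X := by
  have hXE : X ⊆ M'.E := by rw [hE']; exact subset_univ _
  obtain ⟨I, hI⟩ := M'.exists_isBasis X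
  have hclI : M'.closure I = M'.closure X := hI.closure_eq_closure
  have heI : e ∉ M'.closure I := by rwa [hclI]
  have heX : e ∉ I := fun h => heI (M'.subset_closure I hI.indep.subset_ground h)
  have hins : M'.Indep (insert e I) := by
    rw [Matroid.insert_indep_iff]
    exact ⟨hI.indep, fun _ => ⟨by rw [hE']; trivial, heI⟩⟩
  obtain ⟨B₀, hB₀, hIB₀⟩ := hins.exists_isBase_superset
  have heB₀ : e ∈ B₀ := hIB₀ (mem_insert e I)
  set H := M'.closure (B₀ \ {e}) with hH
  have heH : e ∉ H := hB₀.indep.notMem_closure_diff_of_mem heB₀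
  have hHflat : M'.closure H = H := M'.closure_closure _
  refine ⟨Hᶜ, ?_, by simpa using heH, ?_⟩
  · rw [cocirc_iff hE', compl_compl]
    constructor
    · intro hsp
      have := hsp.closure_eq
      rw [hHflat, hE'] at this
      exact heH (this ▸ trivial)
    · intro x hx
      rw [mem_compl_iff] at hx
      rw [union_singleton]
      have hxcl : M'.closure (insert x H) = M'.closure (insert x (B₀ \ {e})) := by
        rw [hH, Matroid.closure_insert_closure_eq_closure_insert]
      by_cases hxe : x = e
      · have hBeq : insert x (B₀ \ {e}) = B₀ := by
          rw [hxe, insert_diff_singleton, insert_eq_of_mem heB₀]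
        rw [Matroid.spanning_iff_closure_eq (by rw [hE']; exact subset_univ _), hxcl, hBeq,
          hB₀.closure_eq]
      · have hxB₀ : x ∉ B₀ := by
          intro hxB
          exact hx (M'.subset_closure _ (diff_subset.trans hB₀.subset_ground)
            ⟨hxB, hxe⟩)
        have hxind : M'.Indep (insert x (B₀ \ {e})) := by
          rw [Matroid.insert_indep_iff]
          exact ⟨hB₀.indep.subset diff_subset, fun _ => ⟨by rw [hE']; trivial, hx⟩⟩
        have := hB₀.exchange_isBase_of_indep hxB₀ hxind
        rw [Matroid.spanning_iff_closure_eq (by rw [hE']; exact subset_univ _), hxcl,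
          this.closure_eq]
  · rw [disjoint_compl_left_iff]
    calc X ⊆ M'.closure X := M'.subset_closure X hXE
    _ = M'.closure I := hclI.symm
    _ ⊆ H := M'.closure_subset_closure (subset_diff_singleton (hIB₀.trans' (subset_insert e I)) heX)

variable [LinearOrder α]

lemma S_iff {X : Set α} {e : α} :
    (∃ D, IsCocircuit M' D ∧ D ⊆ Xᶜ ∪ {e} ∧ SmallestIn e D) ↔
      e ∉ M'.closure ((X ∪ {x | x < e}) \ {e}) := by
  constructor
  · rintro ⟨D, hD, hDX, heD, hmin⟩
    refine not_mem_closure_of_cocirc hE' hD heD (fun y hy => ?_)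
    rw [mem_compl_iff]
    intro hyD
    obtain ⟨hy1, hy2⟩ := hy
    rcases hy1 with hyX | hyL
    · rcases hDX hyD with h1 | h1
      · exact h1 hyX
      · exact hy2 h1
    · exact absurd (hmin y hyD) (not_le.2 hyL)
  · intro hcl
    obtain ⟨D, hD, heD, hdisj⟩ := exists_cocirc hE' hcl
    refine ⟨D, hD, fun y hyD => ?_, heD, fun f hf => ?_⟩
    · by_cases hye : y = e
      · exact Or.inr hye
      · left
        intro hyX
        exact (disjoint_left.1 hdisj hyD) ⟨Or.inl hyX, hye⟩
    · by_contra hlt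
      push_neg at hlt
      exact (disjoint_left.1 hdisj hf) ⟨Or.inr hlt, fun hfe => absurd (hfe ▸ hlt) (lt_irrefl e)⟩

end Aux


section Main

variable {α : Type*} [Fintype α] [LinearOrder α] {M M' : Matroid α}

/-- The common set `S(X)`. -/
def Sact (M' : Matroid α) (X : Set α) : Set α :=
  {e | ∃ D, IsCocircuit M' D ∧ D ⊆ Xᶜ ∪ {e} ∧ SmallestIn e D}

lemma IntSet_eq (X : Set α) : IntSet M' X = Sact M' X ∩ X := by
  ext e
  simp only [IntSet, Sact, mem_setOf_eq, mem_inter_iff]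
  tauto

lemma Pset_eq (X : Set α) : Pset M' X = Sact M' X \ X := by
  ext e
  simp only [Pset, Sact, mem_setOf_eq, mem_diff]
  constructor
  · rintro ⟨heX, D, hD, hDX, hsm⟩
    exact ⟨⟨D, hD, fun y hy => Or.inl (hDX hy), hsm⟩, heX⟩
  · rintro ⟨⟨D, hD, hDX, hsm⟩, heX⟩
    refine ⟨heX, D, hD, fun y hy => ?_, hsm⟩
    rcases hDX hy with h1 | h1
    · exact h1
    · rw [mem_singleton_iff] at h1; exact h1 ▸ heX

lemma cocirc_meets_spanning (hE' : M'.E = Set.univ) {D B : Set α}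
    (hD : IsCocircuit M' D) (hB : M'.Spanning B) : (D ∩ B).Nonempty := by
  rw [cocirc_iff hE'] at hD
  by_contra hcon
  rw [not_nonempty_iff_eq_empty, ← disjoint_iff_inter_eq_empty] at hcon
  exact hD.1 (hB.superset hcon.symm.subset_compl_right (by rw [hE']; exact subset_univ _))

/-- The perspective condition kills externally active elements in suitable cocircuits. -/
lemma ext_not_mem_cocirc (h : Perspective M M') {B D : Set α} {a b : α}
    (hD : IsCocircuit M' D) (hDB : D ∩ B ⊆ {b}) (hbD : SmallestIn b D) (hbB : b ∈ B)
    (haB : a ∉ B) (hC : ∃ C, IsCircuit M C ∧ C ⊆ B ∪ {a} ∧ SmallestIn a C) : a ∉ D := by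
  intro haD
  obtain ⟨C, hC, hCB, haC, hamin⟩ := hC
  have hsub : C ∩ D ⊆ {a, b} := by
    rintro x ⟨hxC, hxD⟩
    rcases hCB hxC with hxB | hxa
    · exact Or.inr (hDB ⟨hxD, hxB⟩)
    · exact Or.inl hxa
  have hne := h C D hC hD
  have haCD : a ∈ C ∩ D := ⟨haC, haD⟩
  have : ∃ x ∈ C ∩ D, x ≠ a := by
    by_contra hcon
    push_neg at hcon
    exact hne (by rw [show C ∩ D = {a} from subset_antisymm (fun x hx => hcon x hx)
      (singleton_subset_iff.2 haCD)]; exact ncard_singleton a)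
  obtain ⟨x, hxCD, hxa⟩ := this
  have hxb : x = b := by rcases hsub hxCD with h1 | h1; exact absurd h1 hxa; exact h1
  subst hxb
  have h1 : a ≤ x := hamin x hxCD.1
  have h2 : x ≤ a := hbD.2 a haD
  exact haB (le_antisymm h1 h2 ▸ hbB)

end Main


theorem interval_IntSet_Pset {α : Type*} [Fintype α] [LinearOrder α]
    (M M' : Matroid α) (hE : M.E = Set.univ) (hE' : M'.E = Set.univ)
    (h : Perspective M M') (B A : Set α)
    (hBi : M.Indep B) (hBs : M'.Spanning B)
    (hA1 : B \ IntSet M' B ⊆ A) (hA2 : A ⊆ B ∪ ExtSet M B) :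
    IntSet M' A = IntSet M' B ∩ A ∧ Pset M' A = IntSet M' B \ A := by
  have hA2' : ∀ a ∈ A, a ∉ B → ∃ C, IsCircuit M C ∧ C ⊆ B ∪ {a} ∧ SmallestIn a C := by
    intro a ha haB
    rcases hA2 ha with h1 | h1
    · exact absurd h1 haB
    · exact h1.2
  have hBA : B \ A ⊆ IntSet M' B := fun b hb => by
    by_contra hbI; exact hb.2 (hA1 ⟨hb.1, hbI⟩)
  have hint : ∀ b ∈ IntSet M' B, ∃ D, IsCocircuit M' D ∧ D ∩ B ⊆ {b} ∧ SmallestIn b D := by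
    rintro b ⟨hbB, D, hD, hDB, hsm⟩
    refine ⟨D, hD, ?_, hsm⟩
    rintro x ⟨hxD, hxB⟩
    rcases hDB hxD with h1 | h1
    · exact absurd hxB h1
    · exact h1
  have hSBsub : Sact M' B ⊆ B := by
    rintro e ⟨D, hD, hDB, hsm⟩
    obtain ⟨x, hxD, hxB⟩ := cocirc_meets_spanning hE' hD hBs
    rcases hDB hxD with h1 | h1
    · exact absurd hxB h1
    · rw [mem_singleton_iff] at h1; exact h1 ▸ hxB
  have hBA' : Sact M' B ⊆ Sact M' A := by
    rintro e ⟨D, hD, hDB, hsm⟩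
    have heB : e ∈ B := hSBsub ⟨D, hD, hDB, hsm⟩
    have hDB' : D ∩ B ⊆ {e} := by
      rintro x ⟨hxD, hxB⟩
      rcases hDB hxD with h1 | h1
      · exact absurd hxB h1
      · exact h1
    refine ⟨D, hD, fun y hyD => ?_, hsm⟩
    by_cases hye : y = e
    · exact Or.inr hye
    · left; intro hyA
      by_cases hyB : y ∈ B
      · exact hye (hDB' ⟨hyD, hyB⟩)
      · exact (ext_not_mem_cocirc h hD hDB' hsm heB hyB (hA2' y hyA hyB)) hyD
  have hbact : ∀ b ∈ B \ A, b ∉ M'.closure (A ∪ {x | x < b}) := by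
    intro b hb
    obtain ⟨D, hD, hDB, hsm⟩ := hint b (hBA hb)
    apply not_mem_closure_of_cocirc hE' hD hsm.1
    intro y hy
    rw [mem_compl_iff]
    intro hyD
    rcases hy with hyA | hyL
    · by_cases hyB : y ∈ B
      · have hyb : y = b := hDB ⟨hyD, hyB⟩
        exact hb.2 (hyb ▸ hyA)
      · exact (ext_not_mem_cocirc h hD hDB hsm hb.1 hyB (hA2' y hyA hyB)) hyD
    · exact absurd (hsm.2 y hyD) (not_le.2 hyL)
  have hAB' : Sact M' A ⊆ Sact M' B := by
    intro e he
    have he' : e ∉ M'.closure ((A ∪ {x | x < e}) \ {e}) := (S_iff hE').1 he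
    set Y : Set α := (A ∪ {x | x < e}) \ {e} with hY
    have key : ∀ n : ℕ, ∀ F : Set α, F ⊆ (B \ A) ∩ {x | e < x} → F.ncard ≤ n →
        e ∈ M'.closure (Y ∪ F) → e ∈ M'.closure Y := by
      intro n
      induction n with
      | zero =>
        intro F hF h0 hcl
        rw [(Set.ncard_eq_zero F.toFinite).1 (Nat.le_zero.1 h0), union_empty] at hcl
        exact hcl
      | succ n ih =>
        intro F hF hcard hcl
        rcases F.eq_empty_or_nonempty with rfl | hne
        · rwa [union_empty] at hcl
        obtain ⟨b, hbF, hbmax⟩ := Set.exists_max_image F id F.toFinite hne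
        have hbBA := hF hbF
        set Z : Set α := Y ∪ (F \ {b}) with hZ
        have hins : insert b Z = Y ∪ F := by
          rw [hZ, ← union_insert, insert_diff_singleton, insert_eq_of_mem hbF]
        rw [← hins] at hcl
        by_cases heZ : e ∈ M'.closure Z
        · refine ih (F \ {b}) (diff_subset.trans hF) ?_ heZ
          have := Set.ncard_diff_singleton_add_one hbF F.toFinite
          omega
        · have hex := Matroid.closure_exchange ⟨hcl, heZ⟩
          exfalso
          apply hbact b hbBA.1
          refine M'.closure_subset_closure ?_ hex.1
          rintro y (rfl | hy)
          · exact Or.inr hbBA.2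
          · rcases hy with hyY | hyF
            · rcases hyY.1 with h1 | h1
              · exact Or.inl h1
              · exact Or.inr (lt_trans h1 hbBA.2)
            · exact Or.inr (lt_of_le_of_ne (hbmax y hyF.1) hyF.2)
    apply (S_iff hE').2
    intro hcl
    apply he'
    refine key ((B \ A) ∩ {x | e < x}).ncard ((B \ A) ∩ {x | e < x}) subset_rfl le_rfl
      (M'.closure_subset_closure ?_ hcl)
    rintro y ⟨hy1, hy2⟩
    rw [mem_singleton_iff] at hy2
    rcases hy1 with hyB | hyL
    · by_cases hyA : y ∈ A
      · exact Or.inl ⟨Or.inl hyA, hy2⟩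
      · rcases lt_trichotomy y e with h1 | h1 | h1
        · exact Or.inl ⟨Or.inr h1, hy2⟩
        · exact absurd h1 hy2
        · exact Or.inr ⟨⟨hyB, hyA⟩, h1⟩
    · exact Or.inl ⟨Or.inr hyL, hy2⟩
  have hS : Sact M' A = Sact M' B := subset_antisymm hAB' hBA'
  have hSB : Sact M' B ∩ B = Sact M' B := inter_eq_self_of_subset_left hSBsub
  constructor
  · rw [IntSet_eq, IntSet_eq, hS, hSB]
  · rw [Pset_eq, IntSet_eq, hS, hSB]
end

section
/- Let M → M' be a matroid perspective on a finite linearly ordered set E. The intervals [B \ Int_{M'}(B), B ∪ Ext_M(B)], as B ranges over all subsets independent in M and spanning in M', form a partition of the Boolean lattice 2^E: every A ⊆ E lies in exactly one such interval. -/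
open Set

section Aux

variable {α : Type*}

/-- Every dependent set in a finite matroid contains a circuit. -/
lemma exists_circuit_of_dep [Fintype α] (M : Matroid α) (X : Set α) (hX : ¬ M.Indep X) :
    ∃ C, C ⊆ X ∧ IsCircuit M C := by
  suffices H : ∀ n (X : Set α), X.ncard = n → ¬ M.Indep X → ∃ C, C ⊆ X ∧ IsCircuit M C from
    H _ X rfl hX
  intro n
  induction n using Nat.strong_induction_on with
  | _ n IH =>
    intro X hn hX
    by_cases h : ∀ x ∈ X, M.Indep (X \ {x})
    · exact ⟨X, subset_rfl, hX, h⟩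
    · push_neg at h
      obtain ⟨x, hx, hdep⟩ := h
      subst hn
      obtain ⟨C, hCX, hC⟩ :=
        IH ((X \ {x}).ncard) (Set.ncard_diff_singleton_lt_of_mem hx (Set.toFinite X))
          _ rfl hdep
      exact ⟨C, hCX.trans diff_subset, hC⟩

/-- The fundamental-circuit lemma. -/
lemma exists_fund_circuit [Fintype α] (M : Matroid α) {I : Set α} {e : α}
    (hI : M.Indep I) (heI : e ∉ I) (he : e ∈ M.closure I) :
    ∃ C, IsCircuit M C ∧ e ∈ C ∧ C \ {e} ⊆ I := by
  have hdep : ¬ M.Indep (insert e I) := by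
    rw [hI.insert_indep_iff_of_notMem heI]
    exact fun h => h.2 he
  obtain ⟨C, hCX, hC⟩ := exists_circuit_of_dep M _ hdep
  have heC : e ∈ C := by
    by_contra heC
    exact hC.1 (hI.subset (fun x hx => ((hCX hx).resolve_left (fun h => heC (h ▸ hx)))))
  exact ⟨C, hC, heC, fun x hx => ((hCX hx.1).resolve_left hx.2)⟩

end Aux

section Core

variable {α : Type*} [Fintype α] [LinearOrder α]

/-- Every element of `A` is in the closure of the part of `B = (A \ Q) ∪ P` above it. -/
lemma mem_closure_construct (M N : Matroid α) (hE : M.E = univ) (A : Set α) :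
    ∀ f, f ∈ A → f ∈ M.closure (((A \ Qset M A) ∪ Qset N Aᶜ) ∩ Ici f) := by
  set B := (A \ Qset M A) ∪ Qset N Aᶜ with hB
  have wf : WellFounded ((· > ·) : α → α → Prop) := wellFounded_gt
  intro f
  induction f using wf.induction with
  | _ f IH =>
    intro hfA
    by_cases hfQ : f ∈ Qset M A
    · obtain ⟨-, C, hC, hCA, heC, hmin⟩ := hfQ
      have hCf : M.Indep (C \ {f}) := hC.2 f heC
      have h1 : f ∈ M.closure (C \ {f}) := by
        by_contra hcl
        rw [hCf.notMem_closure_iff_of_notMem (fun h => h.2 rfl) (by rw [hE]; trivial)] at hcl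
        rw [Set.insert_diff_singleton, Set.insert_eq_of_mem heC] at hcl
        exact hC.1 hcl
      have h2 : C \ {f} ⊆ M.closure (B ∩ Ici f) := by
        intro x hx
        have hxf : f < x := lt_of_le_of_ne (hmin x hx.1) (fun h => hx.2 h.symm)
        have := IH x hxf (hCA hx.1)
        exact M.closure_subset_closure
          (inter_subset_inter_right B (Ici_subset_Ici.mpr hxf.le)) this
      exact M.closure_subset_closure_of_subset_closure h2 h1
    · have hfB : f ∈ B ∩ Ici f := ⟨Or.inl ⟨hfA, hfQ⟩, le_refl f⟩
      exact M.subset_closure _ (by rw [hE]; exact subset_univ _) hfB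

/-- The constructed set is independent in `M`. -/
lemma indep_construct (M N : Matroid α) (hE : M.E = univ)
    (compat : ∀ C D, IsCircuit M C → IsCircuit N D → (C ∩ D).ncard ≠ 1) (A : Set α) :
    M.Indep ((A \ Qset M A) ∪ Qset N Aᶜ) := by
  set B := (A \ Qset M A) ∪ Qset N Aᶜ with hB
  by_contra hdep
  obtain ⟨C, hCB, hC⟩ := exists_circuit_of_dep M _ hdep
  have hCne : C.Nonempty := by
    rw [Set.nonempty_iff_ne_empty]
    rintro rfl
    exact hC.1 M.empty_indep
  by_cases hCP : (C ∩ Qset N Aᶜ).Nonempty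
  · obtain ⟨x, hx, hxmax⟩ := Set.exists_max_image _ id (Set.toFinite _) hCP
    obtain ⟨hxA, D, hD, hDA, hxD, hxmin⟩ := hx.2
    refine compat C D hC hD ?_
    have : C ∩ D = {x} := by
      apply Set.eq_singleton_iff_unique_mem.mpr
      refine ⟨⟨hx.1, hxD⟩, fun y hy => ?_⟩
      have hyP : y ∈ Qset N Aᶜ := by
        rcases hCB hy.1 with h | h
        · exact absurd h.1 (hDA hy.2)
        · exact h
      exact le_antisymm (hxmax y ⟨hy.1, hyP⟩) (hxmin y hy.2)
    rw [this, Set.ncard_singleton]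
  · have hCA : C ⊆ A \ Qset M A := by
      intro y hy
      rcases hCB hy with h | h
      · exact h
      · exact absurd ⟨y, hy, h⟩ hCP
    obtain ⟨e, he, hemin⟩ := Set.exists_min_image _ id (Set.toFinite _) hCne
    exact (hCA he).2 ⟨(hCA he).1, C, hC, fun y hy => (hCA hy).1, he, hemin⟩

/-- The external-activity interval condition for the constructed set. -/
lemma subset_ext_construct (M N : Matroid α) (hE : M.E = univ) (A : Set α)
    (hBi : M.Indep ((A \ Qset M A) ∪ Qset N Aᶜ)) :
    A ⊆ ((A \ Qset M A) ∪ Qset N Aᶜ) ∪ ExtSet M ((A \ Qset M A) ∪ Qset N Aᶜ) := by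
  set B := (A \ Qset M A) ∪ Qset N Aᶜ with hB
  intro e he
  by_cases heB : e ∈ B
  · exact Or.inl heB
  refine Or.inr ⟨heB, ?_⟩
  have hIci : B ∩ Ici e = B ∩ Ioi e := by
    ext x
    refine and_congr_right fun hx => ⟨fun h => lt_of_le_of_ne h (fun hh => heB (hh ▸ hx)), le_of_lt⟩
  have hecl : e ∈ M.closure (B ∩ Ioi e) := hIci ▸ mem_closure_construct M N hE A e he
  have hIi : M.Indep (B ∩ Ioi e) := hBi.subset inter_subset_left
  obtain ⟨C, hC, heC, hCI⟩ := exists_fund_circuit M hIi (fun h => h.2.ne rfl) hecl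
  refine ⟨C, hC, ?_, heC, ?_⟩
  · intro x hx
    by_cases hxe : x = e
    · exact Or.inr (hxe ▸ rfl)
    · exact Or.inl (hCI ⟨hx, hxe⟩).1
  · intro x hx
    by_cases hxe : x = e
    · exact hxe.symm.le
    · exact (hCI ⟨hx, hxe⟩).2.le

/-- Complement of the constructed set is the dual construction. -/
lemma compl_construct (M N : Matroid α) (A : Set α) :
    ((A \ Qset M A) ∪ Qset N Aᶜ)ᶜ = (Aᶜ \ Qset N Aᶜ) ∪ Qset M A := by
  have hQ : ∀ x, x ∈ Qset M A → x ∈ A := fun x hx => hx.1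
  have hP : ∀ x, x ∈ Qset N Aᶜ → x ∉ A := fun x hx => hx.1
  ext x
  have := hQ x; have := hP x
  simp only [mem_compl_iff, mem_union, mem_diff, not_or, not_and, not_not]
  tauto

/-- The key uniqueness step. -/
lemma uniq_case (M : Matroid α) (A B₁ B₂ : Set α)
    (hB₁ : M.Indep B₁) (hA : A ⊆ B₂ ∪ ExtSet M B₂) (e : α)
    (he₁ : e ∈ B₁) (he₂ : e ∉ B₂) (heA : e ∈ A)
    (hmax : ∀ f, ((f ∈ B₁ ∧ f ∉ B₂) ∨ (f ∈ B₂ ∧ f ∉ B₁)) → f ≤ e) : False := by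
  have hext : e ∈ ExtSet M B₂ := ((hA heA).resolve_left he₂)
  obtain ⟨-, C, hC, hCB, heC, hmin⟩ := hext
  have hns : ¬ C ⊆ B₁ := fun hsub => hC.1 (hB₁.subset hsub)
  obtain ⟨f, hfC, hfB₁⟩ := not_subset.mp hns
  have hfB₂ : f ∈ B₂ := by
    rcases hCB hfC with h | h
    · exact h
    · exact absurd (mem_singleton_iff.mp h ▸ he₁) hfB₁
  have h1 : f ≤ e := hmax f (Or.inr ⟨hfB₂, hfB₁⟩)
  have h2 : e ≤ f := hmin f hfC
  exact hfB₁ (le_antisymm h1 h2 ▸ he₁)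

end Core

section Main

variable {α : Type*} [Fintype α] [LinearOrder α]

lemma uniq_all (M N : Matroid α) {A B₁ B₂ : Set α}
    (h1 : M.Indep B₁ ∧ N.Indep B₁ᶜ ∧ A ⊆ B₁ ∪ ExtSet M B₁ ∧ Aᶜ ⊆ B₁ᶜ ∪ ExtSet N B₁ᶜ)
    (h2 : M.Indep B₂ ∧ N.Indep B₂ᶜ ∧ A ⊆ B₂ ∪ ExtSet M B₂ ∧ Aᶜ ⊆ B₂ᶜ ∪ ExtSet N B₂ᶜ) :
    B₁ = B₂ := by
  by_contra hne
  have hΔ : (symmDiff B₁ B₂).Nonempty := Set.symmDiff_nonempty.mpr hne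
  obtain ⟨e, he, hmax'⟩ := Set.exists_max_image _ id (Set.toFinite _) hΔ
  have hmax : ∀ f, ((f ∈ B₁ ∧ f ∉ B₂) ∨ (f ∈ B₂ ∧ f ∉ B₁)) → f ≤ e := by
    intro f hf
    exact hmax' f (Set.mem_symmDiff.mpr hf)
  have hmaxc : ∀ f, ((f ∈ B₁ᶜ ∧ f ∉ B₂ᶜ) ∨ (f ∈ B₂ᶜ ∧ f ∉ B₁ᶜ)) → f ≤ e := by
    intro f hf
    simp only [mem_compl_iff, not_not] at hf
    exact hmax f (by tauto)
  rcases Set.mem_symmDiff.mp he with ⟨he₁, he₂⟩ | ⟨he₂, he₁⟩ <;> by_cases heA : e ∈ A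
  · exact uniq_case M A B₁ B₂ h1.1 h2.2.2.1 e he₁ he₂ heA hmax
  · exact uniq_case N Aᶜ B₂ᶜ B₁ᶜ h2.2.1 h1.2.2.2 e he₂ (by simpa using he₁) heA
      (fun f hf => hmaxc f (by tauto))
  · exact uniq_case M A B₂ B₁ h2.1 h1.2.2.1 e he₂ he₁ heA (fun f hf => hmax f (by tauto))
  · exact uniq_case N Aᶜ B₁ᶜ B₂ᶜ h1.2.1 h2.2.2.2 e he₁ (by simpa using he₂) heA
      (fun f hf => hmaxc f (by tauto))

lemma sym_main (M N : Matroid α) (hE : M.E = univ) (hEN : N.E = univ)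
    (compat : ∀ C D, IsCircuit M C → IsCircuit N D → (C ∩ D).ncard ≠ 1) (A : Set α) :
    ∃! B : Set α, M.Indep B ∧ N.Indep Bᶜ ∧ A ⊆ B ∪ ExtSet M B ∧ Aᶜ ⊆ Bᶜ ∪ ExtSet N Bᶜ := by
  have compat' : ∀ C D, IsCircuit N C → IsCircuit M D → (C ∩ D).ncard ≠ 1 := by
    intro C D hc hd
    rw [inter_comm]
    exact compat D C hd hc
  set B := (A \ Qset M A) ∪ Qset N Aᶜ with hBdef
  have hcompl : Bᶜ = (Aᶜ \ Qset N Aᶜ) ∪ Qset M (Aᶜ)ᶜ := by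
    rw [compl_compl]
    exact compl_construct M N A
  have hi : M.Indep B := indep_construct M N hE compat A
  have hic : N.Indep Bᶜ := by
    rw [hcompl]
    exact indep_construct N M hEN compat' Aᶜ
  refine ⟨B, ⟨hi, hic, subset_ext_construct M N hE A hi, ?_⟩, fun B₂ h2 => ?_⟩
  · rw [hcompl]
    exact subset_ext_construct N M hEN Aᶜ (hcompl ▸ hic)
  · exact (uniq_all M N ⟨hi, hic, subset_ext_construct M N hE A hi, by
      rw [hcompl]; exact subset_ext_construct N M hEN Aᶜ (hcompl ▸ hic)⟩ h2).symm

end Main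

theorem dawson_partition_perspective {α : Type*} [Fintype α] [LinearOrder α]
    (M M' : Matroid α) (hE : M.E = Set.univ) (hE' : M'.E = Set.univ)
    (h : Perspective M M') (A : Set α) :
    ∃! B : Set α, (M.Indep B ∧ M'.Spanning B) ∧
      B \ IntSet M' B ⊆ A ∧ A ⊆ B ∪ ExtSet M B := by
  set N := M'✶ with hN
  have hEN : N.E = univ := by rw [hN, Matroid.dual_ground, hE']
  have compat : ∀ C D, IsCircuit M C → IsCircuit N D → (C ∩ D).ncard ≠ 1 := h
  have key := sym_main M N hE hEN compat A
  have hiff : ∀ B : Set α,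
      ((M.Indep B ∧ M'.Spanning B) ∧ B \ IntSet M' B ⊆ A ∧ A ⊆ B ∪ ExtSet M B)
      ↔ (M.Indep B ∧ N.Indep Bᶜ ∧ A ⊆ B ∪ ExtSet M B ∧ Aᶜ ⊆ Bᶜ ∪ ExtSet N Bᶜ) := by
    intro B
    have hsp : M'.Spanning B ↔ N.Indep Bᶜ := by
      rw [Matroid.spanning_iff_compl_coindep (show B ⊆ M'.E by rw [hE']; exact subset_univ _),
        hE', ← Set.compl_eq_univ_diff]
    have hint : IntSet M' B = ExtSet N Bᶜ := by
      ext x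
      simp only [IntSet, ExtSet, IsCocircuit, hN, mem_setOf_eq, mem_compl_iff, not_not]
    have hdiff : (B \ IntSet M' B ⊆ A) ↔ (Aᶜ ⊆ Bᶜ ∪ ExtSet N Bᶜ) := by
      rw [hint]
      constructor
      · intro hs x hx
        by_cases hxB : x ∈ B
        · by_cases hxE : x ∈ ExtSet N Bᶜ
          · exact Or.inr hxE
          · exact absurd (hs ⟨hxB, hxE⟩) hx
        · exact Or.inl hxB
      · intro hs x hx
        by_contra hxA
        rcases hs hxA with hh | hh
        · exact hh hx.1
        · exact hx.2 hh
    tauto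
  exact (existsUnique_congr hiff).mpr key
end

section
/- Let M be a matroid on a finite linearly ordered set E. The intervals [B \ Int_M(B), B ∪ Ext_M(B)], as B ranges over the bases of M, partition 2^E. -/
open Set

namespace Daw
open Matroid
variable {α : Type*}

lemma exists_circuit [Fintype α] {M : Matroid α} {X : Set α} (hX : ¬ M.Indep X) :
    ∃ C ⊆ X, _root_.IsCircuit M C := by
  have wf : WellFounded ((· < ·) : Set α → Set α → Prop) := IsWellFounded.wf
  induction X using wf.induction with
  | _ Y IH =>
    by_cases h : ∀ x ∈ Y, M.Indep (Y \ {x})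
    · exact ⟨Y, subset_rfl, hX, h⟩
    · push_neg at h
      obtain ⟨x, hxY, hx⟩ := h
      obtain ⟨C, hCs, hC⟩ := IH (Y \ {x}) (Set.sdiff_singleton_ssubset.mpr hxY) hx
      exact ⟨C, hCs.trans diff_subset, hC⟩

lemma fund_circuit [Fintype α] {M : Matroid α} {I : Set α} {e : α}
    (hI : M.Indep I) (heI : e ∉ I) (he : e ∈ M.closure I) :
    ∃ C, _root_.IsCircuit M C ∧ e ∈ C ∧ C ⊆ insert e I := by
  have hdep : ¬ M.Indep (insert e I) := by
    rw [Matroid.Indep.insert_indep_iff_of_notMem hI heI]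
    simp [he]
  obtain ⟨C, hCsub, hC⟩ := exists_circuit hdep
  refine ⟨C, hC, ?_, hCsub⟩
  by_contra heC
  exact hC.1 (hI.subset ((Set.subset_insert_iff_of_notMem heC).mp hCsub))

lemma circuit_mem_closure {M : Matroid α} (hE : M.E = univ) {C : Set α} (hC : _root_.IsCircuit M C)
    {e : α} (he : e ∈ C) : e ∈ M.closure (C \ {e}) := by
  have h1 : M.Indep (C \ {e}) := hC.2 e he
  by_contra hcl
  apply hC.1
  have : M.Indep (insert e (C \ {e})) := by
    rw [h1.insert_indep_iff_of_notMem (by simp)]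
    exact ⟨by rw [hE]; trivial, hcl⟩
  rwa [insert_diff_singleton, insert_eq_of_mem he] at this

lemma cocircuit_compl_cl {M : Matroid α} (hE : M.E = univ) {D : Set α}
    (hD : _root_.IsCircuit M✶ D) {f : α} (hf : f ∈ D) : f ∉ M.closure Dᶜ := by
  intro hcl
  have hco : M.Coindep (D \ {f}) := coindep_def.mpr (hD.2 f hf)
  have hsp : M.Spanning (Dᶜ ∪ {f}) := by
    have h := (coindep_iff_compl_spanning (by rw [hE]; exact subset_univ _)).mp hco
    have heq : M.E \ (D \ {f}) = Dᶜ ∪ {f} := by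
      rw [hE]
      ext x
      by_cases hx : x = f <;> simp [hx, hf]
    rwa [heq] at h
  have hsub : Dᶜ ∪ {f} ⊆ M.closure Dᶜ := by
    refine union_subset (M.subset_closure _ (by rw [hE]; exact subset_univ _)) ?_
    simpa using hcl
  have hsp2 : M.Spanning Dᶜ := by
    rw [spanning_iff_closure_eq (by rw [hE]; exact subset_univ _)] at hsp ⊢
    refine subset_antisymm (M.closure_subset_ground _) ?_
    rw [← hsp]
    exact (M.closure_subset_closure hsub).trans (by rw [M.closure_closure])
  have : M.Coindep D := by
    rw [coindep_iff_compl_spanning (by rw [hE]; exact subset_univ _), hE]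
    rw [← compl_eq_univ_diff]; exact hsp2
  exact hD.1 this.indep

lemma circuit_cocircuit {M : Matroid α} (hE : M.E = univ) {C D : Set α}
    (hC : _root_.IsCircuit M C) (hD : _root_.IsCircuit M✶ D) {e : α} (hCD : C ∩ D ⊆ {e})
    (heC : e ∈ C) (heD : e ∈ D) : False := by
  have h1 : e ∈ M.closure (C \ {e}) := circuit_mem_closure hE hC heC
  have h2 : C \ {e} ⊆ Dᶜ := fun x hx hxD => hx.2 (hCD ⟨hx.1, hxD⟩)
  exact cocircuit_compl_cl hE hD heD (M.closure_subset_closure h2 h1)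

def memB [Fintype α] [LinearOrder α] (M : Matroid α) (A : Set α) : α → Prop :=
  WellFounded.fix (IsWellFounded.wf (r := ((· > ·) : α → α → Prop)))
    (fun e ih =>
      (e ∈ A ∧ e ∉ M.closure {x | ∃ h : x > e, ih x h}) ∨
      (e ∉ A ∧ e ∈ M✶.closure {x | ∃ h : x > e, ¬ ih x h}))

lemma memB_iff [Fintype α] [LinearOrder α] (M : Matroid α) (A : Set α) (e : α) :
    memB M A e ↔ (e ∈ A ∧ e ∉ M.closure {x | x > e ∧ memB M A x}) ∨
      (e ∉ A ∧ e ∈ M✶.closure {x | x > e ∧ ¬ memB M A x}) := by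
  unfold memB
  rw [WellFounded.fix_eq]
  simp only [exists_prop]

variable [Fintype α] [LinearOrder α] {M : Matroid α} {A : Set α}

lemma exists_min_gt (e : α) (h : ∃ x : α, x > e) :
    ∃ y, y > e ∧ ∀ q : α → Prop, {x | x > e ∧ q x} = {x | x ≥ y ∧ q x} := by
  classical
  have hs : (Finset.univ.filter (fun x => e < x)).Nonempty := by
    obtain ⟨x, hx⟩ := h
    exact ⟨x, by simp [hx]⟩
  set y := (Finset.univ.filter (fun x => e < x)).min' hs with hy
  have hye : e < y := by
    have hmem := Finset.min'_mem _ hs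
    rw [Finset.mem_filter] at hmem
    exact hmem.2
  refine ⟨y, hye, fun q => ?_⟩
  ext x
  simp only [mem_setOf_eq]
  constructor
  · rintro ⟨hx, hq⟩
    exact ⟨Finset.min'_le _ x (by simp [hx]), hq⟩
  · rintro ⟨hx, hq⟩
    exact ⟨lt_of_lt_of_le hye hx, hq⟩

lemma invariant (hE : M.E = univ) :
    ∀ e : α, M.Indep {x | x ≥ e ∧ memB M A x} ∧ M✶.Indep {x | x ≥ e ∧ ¬ memB M A x} := by
  have hE' : M✶.E = univ := by rwa [Matroid.dual_ground]
  have wf : WellFounded ((· > ·) : α → α → Prop) := IsWellFounded.wf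
  intro e
  induction e using wf.induction with
  | _ e IH =>
  have hST : M.Indep {x | x > e ∧ memB M A x} ∧ M✶.Indep {x | x > e ∧ ¬ memB M A x} := by
    by_cases hne : ∃ x : α, x > e
    · obtain ⟨y, hy, hsets⟩ := exists_min_gt e hne
      rw [hsets (fun x => memB M A x), hsets (fun x => ¬ memB M A x)]
      exact IH y hy
    · push_neg at hne
      have h1 : {x | x > e ∧ memB M A x} = ∅ := by
        ext x; simp only [mem_setOf_eq, mem_empty_iff_false, iff_false]
        rintro ⟨hx, -⟩; exact absurd hx (not_lt.mpr (hne x))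
      have h2 : {x | x > e ∧ ¬ memB M A x} = ∅ := by
        ext x; simp only [mem_setOf_eq, mem_empty_iff_false, iff_false]
        rintro ⟨hx, -⟩; exact absurd hx (not_lt.mpr (hne x))
      rw [h1, h2]
      exact ⟨M.empty_indep, M✶.empty_indep⟩
  obtain ⟨hS, hT⟩ := hST
  have heS : e ∉ {x | x > e ∧ memB M A x} := by simp
  have heT : e ∉ {x | x > e ∧ ¬ memB M A x} := by simp
  by_cases hm : memB M A e
  · have hset1 : {x | x ≥ e ∧ memB M A x} = insert e {x | x > e ∧ memB M A x} := by
      ext x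
      simp only [mem_setOf_eq, mem_insert_iff]
      constructor
      · rintro ⟨hge, hq⟩
        rcases eq_or_lt_of_le hge with h | h
        · exact Or.inl h.symm
        · exact Or.inr ⟨h, hq⟩
      · rintro (rfl | ⟨h, hq⟩)
        · exact ⟨le_rfl, hm⟩
        · exact ⟨le_of_lt h, hq⟩
    have hset2 : {x | x ≥ e ∧ ¬ memB M A x} = {x | x > e ∧ ¬ memB M A x} := by
      ext x
      simp only [mem_setOf_eq]
      constructor
      · rintro ⟨hge, hq⟩
        rcases eq_or_lt_of_le hge with h | h
        · subst h; exact absurd hm hq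
        · exact ⟨h, hq⟩
      · rintro ⟨h, hq⟩
        exact ⟨le_of_lt h, hq⟩
    rw [hset1, hset2]
    refine ⟨?_, hT⟩
    rcases (memB_iff M A e).mp hm with ⟨hA, hcl⟩ | ⟨hA, hcl⟩
    · rw [Matroid.Indep.insert_indep_iff_of_notMem hS heS]
      exact ⟨by rw [hE]; trivial, hcl⟩
    · by_contra hdep
      rw [Matroid.Indep.insert_indep_iff_of_notMem hS heS] at hdep
      have hclS : e ∈ M.closure {x | x > e ∧ memB M A x} := by
        by_contra h
        exact hdep ⟨by rw [hE]; trivial, h⟩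
      obtain ⟨C, hC, heC, hCs⟩ := fund_circuit hS heS hclS
      obtain ⟨D, hD, heD, hDs⟩ := fund_circuit hT heT hcl
      refine circuit_cocircuit hE hC hD ?_ heC heD
      rintro x ⟨hxC, hxD⟩
      by_contra hxe
      rw [mem_singleton_iff] at hxe
      have h1 := hCs hxC
      have h2 := hDs hxD
      rcases h1 with rfl | h1
      · exact hxe rfl
      rcases h2 with rfl | h2
      · exact hxe rfl
      exact h2.2 h1.2
  · have hset1 : {x | x ≥ e ∧ memB M A x} = {x | x > e ∧ memB M A x} := by
      ext x
      simp only [mem_setOf_eq]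
      constructor
      · rintro ⟨hge, hq⟩
        rcases eq_or_lt_of_le hge with h | h
        · subst h; exact absurd hq hm
        · exact ⟨h, hq⟩
      · rintro ⟨h, hq⟩
        exact ⟨le_of_lt h, hq⟩
    have hset2 : {x | x ≥ e ∧ ¬ memB M A x} = insert e {x | x > e ∧ ¬ memB M A x} := by
      ext x
      simp only [mem_setOf_eq, mem_insert_iff]
      constructor
      · rintro ⟨hge, hq⟩
        rcases eq_or_lt_of_le hge with h | h
        · exact Or.inl h.symm
        · exact Or.inr ⟨h, hq⟩
      · rintro (rfl | ⟨h, hq⟩)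
        · exact ⟨le_rfl, hm⟩
        · exact ⟨le_of_lt h, hq⟩
    rw [hset1, hset2]
    refine ⟨hS, ?_⟩
    rw [memB_iff] at hm
    push_neg at hm
    by_cases hA : e ∈ A
    · have hcl : e ∈ M.closure {x | x > e ∧ memB M A x} := hm.1 hA
      by_contra hdep
      rw [Matroid.Indep.insert_indep_iff_of_notMem (M := M✶) hT heT] at hdep
      have hclT : e ∈ M✶.closure {x | x > e ∧ ¬ memB M A x} := by
        by_contra h
        exact hdep ⟨by rw [hE']; trivial, h⟩
      obtain ⟨C, hC, heC, hCs⟩ := fund_circuit hS heS hcl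
      obtain ⟨D, hD, heD, hDs⟩ := fund_circuit hT heT hclT
      refine circuit_cocircuit hE hC hD ?_ heC heD
      rintro x ⟨hxC, hxD⟩
      by_contra hxe
      rw [mem_singleton_iff] at hxe
      rcases hCs hxC with rfl | h1
      · exact hxe rfl
      rcases hDs hxD with rfl | h2
      · exact hxe rfl
      exact h2.2 h1.2
    · have hcl : e ∉ M✶.closure {x | x > e ∧ ¬ memB M A x} := hm.2 hA
      rw [Matroid.Indep.insert_indep_iff_of_notMem (M := M✶) hT heT]
      exact ⟨by rw [hE']; trivial, hcl⟩
def Bs (M : Matroid α) (A : Set α) : Set α := {x | memB M A x}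

lemma Bs_indep (hE : M.E = univ) : M.Indep (Bs M A) ∧ M✶.Indep ((Bs M A)ᶜ) := by
  have hcompl : (Bs M A)ᶜ = {x | ¬ memB M A x} := rfl
  rcases isEmpty_or_nonempty α with h | h
  · have h1 : Bs M A = ∅ := Set.eq_empty_of_isEmpty _
    have h2 : (Bs M A)ᶜ = ∅ := Set.eq_empty_of_isEmpty _
    rw [h2, h1]
    exact ⟨M.empty_indep, M✶.empty_indep⟩
  · set e0 := Finset.univ.min' (Finset.univ_nonempty (α := α)) with he0
    have hmin : ∀ x : α, e0 ≤ x := fun x => Finset.min'_le _ x (Finset.mem_univ x)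
    have h1 : Bs M A = {x | x ≥ e0 ∧ memB M A x} := by
      ext x; simp only [Bs, mem_setOf_eq]
      exact ⟨fun h => ⟨hmin x, h⟩, fun h => h.2⟩
    have h2 : (Bs M A)ᶜ = {x | x ≥ e0 ∧ ¬ memB M A x} := by
      ext x; simp only [hcompl, mem_setOf_eq]
      exact ⟨fun h => ⟨hmin x, h⟩, fun h => h.2⟩
    rw [h2, h1]
    exact invariant hE e0

lemma Bs_base (hE : M.E = univ) : M.IsBase (Bs M A) := by
  obtain ⟨h1, h2⟩ := Bs_indep (A := A) hE
  have hco : M.Coindep ((Bs M A)ᶜ) := coindep_def.mpr h2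
  have hsp := (coindep_iff_compl_spanning (by rw [hE]; exact subset_univ _)).mp hco
  rw [hE, ← compl_eq_univ_diff, compl_compl] at hsp
  exact h1.isBase_of_spanning hsp

lemma Bs_prop1 (hE : M.E = univ) : Bs M A \ IntSet M (Bs M A) ⊆ A := by
  have hE' : M✶.E = univ := by rwa [Matroid.dual_ground]
  rintro e ⟨heB, heI⟩
  by_contra hA
  rcases (memB_iff M A e).mp heB with ⟨h, -⟩ | ⟨-, hcl⟩
  · exact hA h
  have hT : M✶.Indep {x | x > e ∧ ¬ memB M A x} :=
    (invariant hE e).2.subset (fun x hx => ⟨le_of_lt hx.1, hx.2⟩)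
  have heT : e ∉ {x | x > e ∧ ¬ memB M A x} := by simp
  obtain ⟨D, hD, heD, hDs⟩ := fund_circuit hT heT hcl
  refine heI ⟨heB, D, hD, ?_, heD, ?_⟩
  · intro x hx
    rcases hDs hx with rfl | hx'
    · exact Or.inr rfl
    · exact Or.inl hx'.2
  · intro f hf
    rcases hDs hf with rfl | hf'
    · exact le_rfl
    · exact le_of_lt hf'.1

lemma Bs_prop2 (hE : M.E = univ) : A ⊆ Bs M A ∪ ExtSet M (Bs M A) := by
  intro e heA
  by_cases hm : memB M A e
  · exact Or.inl hm
  refine Or.inr ⟨hm, ?_⟩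
  have hcl : e ∈ M.closure {x | x > e ∧ memB M A x} := by
    by_contra h
    exact hm ((memB_iff M A e).mpr (Or.inl ⟨heA, h⟩))
  have hS : M.Indep {x | x > e ∧ memB M A x} :=
    (invariant hE e).1.subset (fun x hx => ⟨le_of_lt hx.1, hx.2⟩)
  have heS : e ∉ {x | x > e ∧ memB M A x} := by simp
  obtain ⟨C, hC, heC, hCs⟩ := fund_circuit hS heS hcl
  refine ⟨C, hC, ?_, heC, ?_⟩
  · intro x hx
    rcases hCs hx with rfl | hx'
    · exact Or.inr rfl
    · exact Or.inl hx'.2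
  · intro f hf
    rcases hCs hf with rfl | hf'
    · exact le_rfl
    · exact le_of_lt hf'.1

lemma Bs_unique (hE : M.E = univ) {B : Set α} (hB : M.IsBase B)
    (h1 : B \ IntSet M B ⊆ A) (h2 : A ⊆ B ∪ ExtSet M B) : B = Bs M A := by
  have hE' : M✶.E = univ := by rwa [Matroid.dual_ground]
  have hBc : M✶.IsBase Bᶜ := by
    have := hB.compl_isBase_dual
    rwa [hE, ← compl_eq_univ_diff] at this
  have wf : WellFounded ((· > ·) : α → α → Prop) := IsWellFounded.wf
  have key : ∀ e, e ∈ B ↔ memB M A e := by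
    intro e
    induction e using wf.induction with
    | _ e IH =>
    have hSeq : {x | x > e ∧ memB M A x} = {x | x > e ∧ x ∈ B} := by
      ext x
      simp only [mem_setOf_eq]
      exact ⟨fun h => ⟨h.1, (IH x h.1).mpr h.2⟩, fun h => ⟨h.1, (IH x h.1).mp h.2⟩⟩
    have hTeq : {x | x > e ∧ ¬ memB M A x} = {x | x > e ∧ x ∉ B} := by
      ext x
      simp only [mem_setOf_eq]
      exact ⟨fun h => ⟨h.1, fun hx => h.2 ((IH x h.1).mp hx)⟩,
        fun h => ⟨h.1, fun hx => h.2 ((IH x h.1).mpr hx)⟩⟩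
    by_cases hA : e ∈ A
    · constructor
      · intro heB
        rw [memB_iff]
        refine Or.inl ⟨hA, ?_⟩
        rw [hSeq]
        intro hcl
        have hsub : {x | x > e ∧ x ∈ B} ⊆ B \ {e} :=
          fun x hx => ⟨hx.2, by simp [ne_of_gt hx.1]⟩
        exact hB.indep.notMem_closure_diff_of_mem heB (M.closure_subset_closure hsub hcl)
      · intro hm
        by_contra heB
        have heExt : e ∈ ExtSet M B := by
          rcases h2 hA with h | h
          · exact absurd h heB
          · exact h
        obtain ⟨-, C, hC, hCs, hmin⟩ := heExt
        have h3 : e ∈ M.closure (C \ {e}) := circuit_mem_closure hE hC hmin.1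
        have h4 : C \ {e} ⊆ {x | x > e ∧ x ∈ B} := by
          rintro x ⟨hxC, hxe⟩
          rw [mem_singleton_iff] at hxe
          have hxB : x ∈ B := by
            rcases hCs hxC with h | h
            · exact h
            · exact absurd h hxe
          exact ⟨lt_of_le_of_ne (hmin.2 x hxC) (Ne.symm hxe), hxB⟩
        rcases (memB_iff M A e).mp hm with ⟨-, hncl⟩ | ⟨hA', -⟩
        · rw [hSeq] at hncl
          exact hncl (M.closure_subset_closure h4 h3)
        · exact hA' hA
    · constructor
      · intro heB
        have heInt : e ∈ IntSet M B := by
          by_contra h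
          exact hA (h1 ⟨heB, h⟩)
        obtain ⟨-, D, hD, hDs, hmin⟩ := heInt
        have h3 : e ∈ M✶.closure (D \ {e}) := circuit_mem_closure hE' hD hmin.1
        have h4 : D \ {e} ⊆ {x | x > e ∧ x ∉ B} := by
          rintro x ⟨hxD, hxe⟩
          rw [mem_singleton_iff] at hxe
          have hxB : x ∉ B := by
            rcases hDs hxD with h | h
            · exact h
            · exact absurd h hxe
          exact ⟨lt_of_le_of_ne (hmin.2 x hxD) (Ne.symm hxe), hxB⟩
        rw [memB_iff]
        refine Or.inr ⟨hA, ?_⟩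
        rw [hTeq]
        exact M✶.closure_subset_closure h4 h3
      · intro hm
        by_contra heB
        rcases (memB_iff M A e).mp hm with ⟨hA', -⟩ | ⟨-, hcl⟩
        · exact hA hA'
        rw [hTeq] at hcl
        have hsub : {x | x > e ∧ x ∉ B} ⊆ Bᶜ \ {e} :=
          fun x hx => ⟨hx.2, by simp [ne_of_gt hx.1]⟩
        exact hBc.indep.notMem_closure_diff_of_mem heB (M✶.closure_subset_closure hsub hcl)
  ext x
  exact key x

end Daw

theorem dawson_partition_matroid {α : Type*} [Fintype α] [LinearOrder α]
    (M : Matroid α) (hE : M.E = Set.univ) (A : Set α) :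
    ∃! B : Set α, M.IsBase B ∧ B \ IntSet M B ⊆ A ∧ A ⊆ B ∪ ExtSet M B := by
  refine ⟨Daw.Bs M A, ⟨Daw.Bs_base hE, Daw.Bs_prop1 hE, Daw.Bs_prop2 hE⟩, ?_⟩
  rintro B ⟨hB, h1, h2⟩
  exact Daw.Bs_unique hE hB h1 h2
end
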